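/- arXiv:2601.19663 — 5 statements merged into one kernel-verified Lean document; each statement's English description precedes it below -/
import Mathlib

section
/- Let δ ∈ (1,2) and let P ⊂ B(0,10) ⊂ ℝ² be a compact set homeomorphic to the circle S¹, equipped with a Borel measure μ and constants C̃_μ ≥ 1, C̃_arc ≥ 1 such that: (i) (1/C̃_μ) r^δ ≤ μ(B(x₀,r) ∩ P) ≤ C̃_μ r^δ for all x₀ ∈ P and r ∈ [0,1]; (ii) for every pair of points z₁, z₂ ∈ P, letting γ₁, γ₂ be the two arcs of P joining z₁ and z₂, one has min_{j=1,2} diam(γ_j) ≤ C̃_arc |z₁ − z₂|. Set C_out = 2(4·5^δ C̃_μ²)^{1/(δ−1)}. Then the set X = P ∩ B(0,5) is ν-porous on lines from scales 0 to α₁, with ν = 1/(200 C_out C̃_arc²) and α₁ = 1/(10 C_out C̃_arc). That is, for every line segment I ⊂ ℝ² of length r ∈ (0, α₁), there exists a point x on I such that the ball B(x, νr) is disjoint from X. -/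
open MeasureTheory Metric Set Function
open scoped ENNReal Pointwise RealInnerProductSpace

set_option maxHeartbeats 1000000

noncomputable section

/-- `X ⊆ ℝ^d` is `ν`-porous on balls from scales `α₀` to `α₁`: for every ball of diameter `R`
with `α₀ < R < α₁` there is a point `x` in the ball with `B(x, νR)` disjoint from `X`. -/
def PorousOnBalls {d : ℕ} (ν α₀ α₁ : ℝ) (X : Set (EuclideanSpace ℝ (Fin d))) : Prop :=
  ∀ (c : EuclideanSpace ℝ (Fin d)) (R : ℝ), α₀ < R → R < α₁ →
    ∃ x ∈ Metric.closedBall c (R / 2), Disjoint (Metric.ball x (ν * R)) X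

/-- `X ⊆ ℝ^d` is `ν`-porous on lines from scales `α₀` to `α₁`: for every line segment of length
`R` with `α₀ < R < α₁` there is a point `x` on the segment with `B(x, νR)` disjoint from `X`. -/
def PorousOnLines {d : ℕ} (ν α₀ α₁ : ℝ) (X : Set (EuclideanSpace ℝ (Fin d))) : Prop :=
  ∀ a b : EuclideanSpace ℝ (Fin d), α₀ < dist a b → dist a b < α₁ →
    ∃ x ∈ segment ℝ a b, Disjoint (Metric.ball x (ν * dist a b)) X

/-- The cube `[-a, a]^d`. -/
def symCube (d : ℕ) (a : ℝ) : Set (EuclideanSpace ℝ (Fin d)) := {x | ∀ i, |x i| ≤ a}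

/-- The FUP exponent `β = exp(-exp((C ν⁻² |log ν|)^(C ν⁻¹ |log ν|)))`. -/
def fupBeta (C ν : ℝ) : ℝ :=
  Real.exp (-Real.exp ((C * ν⁻¹ ^ 2 * |Real.log ν|) ^ (C * ν⁻¹ * |Real.log ν|)))

local notation "E2" => EuclideanSpace ℝ (Fin 2)

lemma aux_Co40 {δ Cμ : ℝ} (hδ1 : 1 < δ) (hδ2 : δ < 2) (hCμ : 1 ≤ Cμ) :
    40 ≤ 2 * (4 * (5:ℝ) ^ δ * Cμ ^ 2) ^ (1 / (δ - 1)) := by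
  have hδ0 : (0:ℝ) < δ - 1 := by linarith
  have h5 : (5:ℝ) ≤ 5 ^ δ := by
    calc (5:ℝ) = 5 ^ (1:ℝ) := (Real.rpow_one 5).symm
      _ ≤ 5 ^ δ := Real.rpow_le_rpow_of_exponent_le (by norm_num) hδ1.le
  have hC2 : (1:ℝ) ≤ Cμ ^ 2 := by nlinarith
  have hA : (20:ℝ) ≤ 4 * (5:ℝ) ^ δ * Cμ ^ 2 := by nlinarith
  have h1e : (1:ℝ) ≤ 1 / (δ - 1) := by
    rw [le_div_iff₀ hδ0]; linarith
  have h2 : (4 * (5:ℝ) ^ δ * Cμ ^ 2) ^ (1:ℝ) ≤ (4 * (5:ℝ) ^ δ * Cμ ^ 2) ^ (1 / (δ - 1)) :=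
    Real.rpow_le_rpow_of_exponent_le (by linarith) h1e
  rw [Real.rpow_one] at h2
  linarith

lemma nonflat {δ Cμ : ℝ} (hδ1 : 1 < δ) (hδ2 : δ < 2) (hCμ : 1 ≤ Cμ)
    {P : Set E2} {μ : Measure E2}
    (hreg : ∀ x₀ ∈ P, ∀ r : ℝ, r ∈ Set.Icc (0 : ℝ) 1 →
      ENNReal.ofReal (Cμ⁻¹ * r ^ δ) ≤ μ (Metric.ball x₀ r ∩ P) ∧
      μ (Metric.ball x₀ r ∩ P) ≤ ENNReal.ofReal (Cμ * r ^ δ))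
    (u nn : E2) (hu : ‖u‖ = 1) (hun : ⟪u, nn⟫ = 0)
    (hcoord : ∀ v : E2, ⟪v, u⟫ ^ 2 + ⟪v, nn⟫ ^ 2 = ‖v‖ ^ 2)
    (p : E2) (hp : p ∈ P) (s : ℝ) (hs0 : 0 < s) (hs1 : s ≤ 1) :
    ∃ q ∈ P, dist q p ≤ s ∧
      s / (2 * (4 * (5:ℝ) ^ δ * Cμ ^ 2) ^ (1 / (δ - 1))) ≤ |⟪q - p, nn⟫| := by
  have hδ0 : (0:ℝ) < δ - 1 := by linarith
  have hCμ0 : (0:ℝ) < Cμ := by linarith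
  set A : ℝ := 4 * (5:ℝ) ^ δ * Cμ ^ 2 with hAdef
  have hApos : 0 < A := by positivity
  set Co : ℝ := 2 * A ^ (1 / (δ - 1)) with hCodef
  have hCo40 : 40 ≤ Co := aux_Co40 hδ1 hδ2 hCμ
  have hCopos : (0:ℝ) < Co := by linarith
  by_contra hcontra
  push_neg at hcontra
  set wt : ℝ := s / Co with hwtdef
  have hwt0 : 0 < wt := by positivity
  have hwtle : wt ≤ s / 40 := by
    apply div_le_div_of_nonneg_left hs0.le (by norm_num) hCo40
  have huu : ⟪u, u⟫ = (1:ℝ) := by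
    rw [real_inner_self_eq_norm_sq, hu]; norm_num
  set K : ℤ := ⌈Co / 2⌉ with hKdef
  have hKge : Co / 2 ≤ (K:ℝ) := Int.le_ceil _
  have hKlt : (K:ℝ) < Co / 2 + 1 := Int.ceil_lt_add_one _
  set c : ℤ → E2 := fun k => p + (2 * wt * (k:ℝ)) • u with hcdef
  have hcover : Metric.ball p s ∩ P ⊆
      ⋃ k ∈ Finset.Icc (-K) K, (Metric.ball (c k) (2 * wt) ∩ P) := by
    rintro z ⟨hzb, hzP⟩
    have hzp : dist z p < s := mem_ball.mp hzb
    have hβ : |⟪z - p, nn⟫| < wt := hcontra z hzP hzp.le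
    set α : ℝ := ⟪z - p, u⟫ with hαdef
    have hαle : |α| ≤ ‖z - p‖ := by
      have h := hcoord (z - p)
      have h2 : α ^ 2 ≤ ‖z - p‖ ^ 2 := by nlinarith [sq_nonneg (⟪z - p, nn⟫)]
      calc |α| = Real.sqrt (α ^ 2) := (Real.sqrt_sq_eq_abs α).symm
        _ ≤ Real.sqrt (‖z - p‖ ^ 2) := Real.sqrt_le_sqrt h2
        _ = ‖z - p‖ := Real.sqrt_sq (norm_nonneg _)
    have hαlt : |α| < s := by
      rw [← dist_eq_norm] at hαle; linarith
    set k : ℤ := round (α / (2 * wt)) with hkdef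
    have hround : |α / (2 * wt) - (k:ℝ)| ≤ 1 / 2 := abs_sub_round _
    have hxb : |α / (2 * wt)| ≤ Co / 2 := by
      rw [abs_div, abs_of_pos (by positivity : (0:ℝ) < 2 * wt)]
      rw [div_le_div_iff₀ (by positivity) (by norm_num)]
      have : s * 2 = 2 * wt * Co := by
        rw [hwtdef]; field_simp
      nlinarith [hαlt]
    have hkabs : |(k:ℝ)| ≤ Co / 2 + 1 / 2 := by
      have h1 : |(k:ℝ)| - |α / (2 * wt)| ≤ |α / (2 * wt) - (k:ℝ)| := by
        rw [abs_sub_comm]; exact abs_sub_abs_le_abs_sub _ _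
      linarith
    have hkK : k ∈ Finset.Icc (-K) K := by
      rw [Finset.mem_Icc]
      have h1 : ((|k| : ℤ) : ℝ) < (K:ℝ) + 1 := by
        push_cast
        calc |(k:ℝ)| ≤ Co / 2 + 1 / 2 := hkabs
          _ < (K:ℝ) + 1 := by linarith
      have h2 : |k| ≤ K := by
        have := Int.lt_add_one_iff.mp (by exact_mod_cast h1)
        exact this
      exact abs_le.mp h2
    apply Set.mem_biUnion hkK
    refine ⟨?_, hzP⟩
    have e0 : z - c k = (z - p) - (2 * wt * (k:ℝ)) • u := by
      show z - (p + (2 * wt * (k:ℝ)) • u) = (z - p) - (2 * wt * (k:ℝ)) • u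
      abel
    have e1 : ⟪z - c k, u⟫ = α - 2 * wt * (k:ℝ) := by
      rw [e0, inner_sub_left, real_inner_smul_left, huu, hαdef]; ring
    have e2 : ⟪z - c k, nn⟫ = ⟪z - p, nn⟫ := by
      rw [e0, inner_sub_left, real_inner_smul_left, hun]; ring
    have hnorm2 : ‖z - c k‖ ^ 2 = (α - 2 * wt * (k:ℝ)) ^ 2 + ⟪z - p, nn⟫ ^ 2 := by
      rw [← hcoord (z - c k), e1, e2]
    have h1 : |α - 2 * wt * (k:ℝ)| ≤ wt := by
      have he : α - 2 * wt * (k:ℝ) = (2 * wt) * (α / (2 * wt) - (k:ℝ)) := by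
        field_simp
      rw [he, abs_mul, abs_of_pos (by positivity : (0:ℝ) < 2 * wt)]
      nlinarith
    have b1 : (α - 2 * wt * (k:ℝ)) ^ 2 ≤ wt ^ 2 := by
      rw [← sq_abs]
      exact pow_le_pow_left₀ (abs_nonneg _) h1 2
    have b2 : (⟪z - p, nn⟫:ℝ) ^ 2 < wt ^ 2 := by
      rw [← sq_abs]
      exact pow_lt_pow_left₀ hβ (abs_nonneg _) (by norm_num)
    have hlt : ‖z - c k‖ ^ 2 < (2 * wt) ^ 2 := by
      rw [hnorm2]; nlinarith [hwt0]
    rw [mem_ball, dist_eq_norm]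
    nlinarith [norm_nonneg (z - c k), hwt0]
  -- measure estimates
  have hlow := (hreg p hp s ⟨hs0.le, hs1⟩).1
  have h4wt : 4 * wt ∈ Set.Icc (0:ℝ) 1 := by
    constructor
    · positivity
    · nlinarith
  have hup1 : ∀ k : ℤ, μ (Metric.ball (c k) (2 * wt) ∩ P) ≤ ENNReal.ofReal (Cμ * (4 * wt) ^ δ) := by
    intro k
    rcases Set.eq_empty_or_nonempty (Metric.ball (c k) (2 * wt) ∩ P) with he | ⟨pk, hpkb, hpkP⟩
    · rw [he]; simp
    · have hsub : Metric.ball (c k) (2 * wt) ⊆ Metric.ball pk (4 * wt) := by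
        intro y hy
        rw [mem_ball] at hy ⊢
        have h2 : dist (c k) pk < 2 * wt := by
          rw [dist_comm]; exact mem_ball.mp hpkb
        have := dist_triangle y (c k) pk
        linarith
      calc μ (Metric.ball (c k) (2 * wt) ∩ P) ≤ μ (Metric.ball pk (4 * wt) ∩ P) :=
            measure_mono (Set.inter_subset_inter_left _ hsub)
        _ ≤ _ := (hreg pk hpkP (4 * wt) h4wt).2
  have hcardR : ((Finset.Icc (-K) K).card : ℝ) ≤ Co + 3 := by
    have hle : -K ≤ K + 1 := by
      have : (0:ℝ) ≤ (K:ℝ) := by linarith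
      have h0 : 0 ≤ K := by exact_mod_cast this
      omega
    have h := Int.card_Icc_of_le (-K) K hle
    have : ((Finset.Icc (-K) K).card : ℝ) = ((K + 1 - -K : ℤ) : ℝ) := by exact_mod_cast h
    rw [this]; push_cast; linarith
  have hchain : ENNReal.ofReal (Cμ⁻¹ * s ^ δ) ≤ ENNReal.ofReal ((Co + 3) * (Cμ * (4 * wt) ^ δ)) := by
    calc ENNReal.ofReal (Cμ⁻¹ * s ^ δ) ≤ μ (Metric.ball p s ∩ P) := hlow
      _ ≤ μ (⋃ k ∈ Finset.Icc (-K) K, (Metric.ball (c k) (2 * wt) ∩ P)) := measure_mono hcover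
      _ ≤ ∑ k ∈ Finset.Icc (-K) K, μ (Metric.ball (c k) (2 * wt) ∩ P) :=
            measure_biUnion_finset_le _ _
      _ ≤ ∑ _k ∈ Finset.Icc (-K) K, ENNReal.ofReal (Cμ * (4 * wt) ^ δ) :=
            Finset.sum_le_sum (fun k _ => hup1 k)
      _ = ((Finset.Icc (-K) K).card : ℝ≥0∞) * ENNReal.ofReal (Cμ * (4 * wt) ^ δ) := by
            rw [Finset.sum_const, nsmul_eq_mul]
      _ ≤ ENNReal.ofReal (Co + 3) * ENNReal.ofReal (Cμ * (4 * wt) ^ δ) := by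
            apply mul_le_mul_left
            rw [← ENNReal.ofReal_natCast]
            exact ENNReal.ofReal_le_ofReal hcardR
      _ = ENNReal.ofReal ((Co + 3) * (Cμ * (4 * wt) ^ δ)) := by
            rw [← ENNReal.ofReal_mul (by positivity)]
  have hreal : Cμ⁻¹ * s ^ δ ≤ (Co + 3) * (Cμ * (4 * wt) ^ δ) := by
    have hrhs : (0:ℝ) ≤ (Co + 3) * (Cμ * (4 * wt) ^ δ) := by positivity
    exact (ENNReal.ofReal_le_ofReal_iff hrhs).mp hchain
  -- algebra to contradiction
  have hsd : (0:ℝ) < s ^ δ := Real.rpow_pos_of_pos hs0 δ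
  have hCoδpos : (0:ℝ) < Co ^ δ := Real.rpow_pos_of_pos hCopos δ
  have hwtδ : (4 * wt) ^ δ = 4 ^ δ * (s ^ δ / Co ^ δ) := by
    rw [Real.mul_rpow (by norm_num) hwt0.le, hwtdef, Real.div_rpow hs0.le hCopos.le]
  rw [hwtδ] at hreal
  have h4δpos : (0:ℝ) < 4 ^ δ := Real.rpow_pos_of_pos (by norm_num) δ
  have hreal2 : Cμ⁻¹ * s ^ δ ≤ ((Co + 3) * Cμ * 4 ^ δ / Co ^ δ) * s ^ δ := by
    calc Cμ⁻¹ * s ^ δ ≤ (Co + 3) * (Cμ * (4 ^ δ * (s ^ δ / Co ^ δ))) := hreal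
      _ = ((Co + 3) * Cμ * 4 ^ δ / Co ^ δ) * s ^ δ := by ring
  have hreal3 : Cμ⁻¹ ≤ (Co + 3) * Cμ * 4 ^ δ / Co ^ δ :=
    le_of_mul_le_mul_right (by linarith [hreal2]) hsd
  have hreal4 : Co ^ δ ≤ (Co + 3) * Cμ ^ 2 * 4 ^ δ := by
    rw [inv_eq_one_div, div_le_div_iff₀ hCμ0 hCoδpos] at hreal3
    nlinarith [hreal3]
  -- lower bound for Co^δ
  have hCoδsplit : Co ^ (δ - 1) * Co = Co ^ δ := by
    have h := Real.rpow_add hCopos (δ - 1) 1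
    rw [Real.rpow_one] at h
    rw [← h]
    congr 1
    ring
  have hCom1 : Co ^ (δ - 1) = 2 ^ (δ - 1) * A := by
    rw [hCodef, Real.mul_rpow (by norm_num) (Real.rpow_nonneg hApos.le _),
      ← Real.rpow_mul hApos.le, one_div_mul_cancel (ne_of_gt hδ0), Real.rpow_one]
  have h2d : (1:ℝ) ≤ 2 ^ (δ - 1) := by
    have := Real.rpow_le_rpow_of_exponent_le (by norm_num : (1:ℝ) ≤ 2) (by linarith : (0:ℝ) ≤ δ - 1)
    rwa [Real.rpow_zero] at this
  have h54 : (5:ℝ) ^ δ = (5 / 4) ^ δ * 4 ^ δ := by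
    rw [← Real.mul_rpow (by norm_num) (by norm_num)]
    norm_num
  have h54ge : (5:ℝ) / 4 ≤ (5 / 4 : ℝ) ^ δ := by
    have := Real.rpow_le_rpow_of_exponent_le (by norm_num : (1:ℝ) ≤ 5/4) hδ1.le
    rwa [Real.rpow_one] at this
  have hCμ2 : (1:ℝ) ≤ Cμ ^ 2 := by nlinarith
  have hAge : 5 * 4 ^ δ * Cμ ^ 2 ≤ A := by
    rw [hAdef, h54]
    nlinarith [h54ge, h4δpos, hCμ2]
  have hCoge : A * Co ≤ Co ^ δ := by
    rw [← hCoδsplit, hCom1]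
    nlinarith [mul_pos hApos hCopos, h2d]
  have hkey : 5 * Co ≤ Co + 3 := by
    have hchain2 : (5 * Co) * (4 ^ δ * Cμ ^ 2) ≤ (Co + 3) * (4 ^ δ * Cμ ^ 2) := by
      calc (5 * Co) * (4 ^ δ * Cμ ^ 2) = (5 * 4 ^ δ * Cμ ^ 2) * Co := by ring
        _ ≤ A * Co := mul_le_mul_of_nonneg_right hAge hCopos.le
        _ ≤ Co ^ δ := hCoge
        _ ≤ (Co + 3) * Cμ ^ 2 * 4 ^ δ := hreal4
        _ = (Co + 3) * (4 ^ δ * Cμ ^ 2) := by ring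
    exact le_of_mul_le_mul_right hchain2 (by positivity)
  linarith

lemma per_int (γ : ℝ → E2) (hγper : ∀ t, γ (t + 1) = γ t) :
    ∀ (m : ℤ) (t : ℝ), γ (t + m) = γ t := by
  intro m
  induction m using Int.induction_on with
  | zero => intro t; simp
  | succ k ih =>
      intro t
      have h1 : (t : ℝ) + ((k : ℤ) + 1 : ℤ) = (t + (k : ℤ)) + 1 := by push_cast; ring
      rw [h1, hγper, ih]
  | pred k ih =>
      intro t
      have h1 : (t : ℝ) + ((-(k:ℤ) - 1 : ℤ)) = (t - 1) + (-(k:ℤ):ℤ) := by push_cast; ring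
      have h2 : (t : ℝ) - 1 + 1 = t := by ring
      rw [h1, ih (t - 1), ← h2, hγper, h2]


lemma core_blow (γ : ℝ → E2) (hγcont : Continuous γ)
    (hγper : ∀ t, γ (t + 1) = γ t)
    (Carc : ℝ) (hCarc : 1 ≤ Carc)
    (harc : ∀ t₁ t₂ : ℝ, t₁ ≤ t₂ → t₂ ≤ t₁ + 1 →
      min (Metric.diam (γ '' Set.Icc t₁ t₂)) (Metric.diam (γ '' Set.Icc t₂ (t₁ + 1))) ≤
        Carc * dist (γ t₁) (γ t₂))
    (a b : E2) (nn : E2) (hnn : ‖nn‖ = 1)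
    (w H s2 r4 : ℝ) (hw0 : 0 ≤ w)
    (hseg0 : ∀ x ∈ segment ℝ a b, ⟪x - a, nn⟫ = 0)
    (hwit : ∀ x ∈ segment ℝ a b, ∃ T : ℝ, dist (γ T) x ≤ w)
    (σ1 σ2 σ3 : ℝ) (h01 : 0 ≤ σ1) (h12 : σ1 < σ2) (h23 : σ2 < σ3) (h31 : σ3 < 1)
    (μ1 μ2 μ3 : E2) (hμ1 : μ1 ∈ segment ℝ a b) (hμ2 : μ2 ∈ segment ℝ a b)
    (hμ3 : μ3 ∈ segment ℝ a b)
    (hq1 : dist (γ σ1) μ1 ≤ s2) (hq2 : dist (γ σ2) μ2 ≤ s2) (hq3 : dist (γ σ3) μ3 ≤ s2)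
    (hφ1 : H ≤ |⟪γ σ1 - a, nn⟫|) (hφ2 : H ≤ |⟪γ σ2 - a, nn⟫|) (hφ3 : H ≤ |⟪γ σ3 - a, nn⟫|)
    (hd12 : r4 ≤ dist μ1 μ2) (hd13 : r4 ≤ dist μ1 μ3) (hd23 : r4 ≤ dist μ2 μ3)
    (hs2nn : 0 ≤ s2)
    (hHw : Carc * (2 * w) < H - 2 * w)
    (hfin : Carc * (s2 + w) < r4 - 2 * s2 - 2 * w) : False := by
  have hCarc0 : (0:ℝ) ≤ Carc := by linarith
  -- Lipschitz property of the height function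
  have hlipφ : ∀ y z : E2, |⟪y - a, nn⟫ - ⟪z - a, nn⟫| ≤ dist y z := by
    intro y z
    have h1 : ⟪y - a, nn⟫ - ⟪z - a, nn⟫ = ⟪y - z, nn⟫ := by
      rw [← inner_sub_left]
      congr 1
      abel
    rw [h1, dist_eq_norm]
    calc |⟪y - z, nn⟫| ≤ ‖y - z‖ * ‖nn‖ := abs_real_inner_le_norm _ _
      _ = ‖y - z‖ := by rw [hnn, mul_one]
  have hφnear : ∀ z : E2, ∀ x ∈ segment ℝ a b, dist z x ≤ w → |⟪z - a, nn⟫| ≤ w := by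
    intro z x hx hd
    have h := hlipφ z x
    rw [hseg0 x hx, sub_zero] at h
    linarith
  have hfar : ∀ z Q : E2, |⟪z - a, nn⟫| ≤ w → H ≤ |⟪Q - a, nn⟫| → H - w ≤ dist z Q := by
    intro z Q hz hQ
    have h := hlipφ Q z
    have h2 : |⟪Q - a, nn⟫| - |⟪z - a, nn⟫| ≤ |⟪Q - a, nn⟫ - ⟪z - a, nn⟫| :=
      abs_sub_abs_le_abs_sub _ _
    rw [dist_comm z Q]
    linarith
  -- the engine: three-point condition contradiction
  have engine : ∀ v v' : ℝ, v ≤ v' → v' ≤ v + 1 → ∀ Qa Qb : E2,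
      Qa ∈ γ '' Set.Icc v v' → Qb ∈ γ '' Set.Icc v' (v + 1) →
      Carc * dist (γ v) (γ v') < dist (γ v) Qa →
      Carc * dist (γ v) (γ v') < dist (γ v) Qb → False := by
    intro v v' hvv' hv1 Qa Qb hQa hQb ha hb
    have hb1 : Bornology.IsBounded (γ '' Set.Icc v v') := (isCompact_Icc.image hγcont).isBounded
    have hb2 : Bornology.IsBounded (γ '' Set.Icc v' (v + 1)) :=
      (isCompact_Icc.image hγcont).isBounded
    have hmem1 : γ v ∈ γ '' Set.Icc v v' := ⟨v, ⟨le_refl v, hvv'⟩, rfl⟩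
    have hmem2 : γ v ∈ γ '' Set.Icc v' (v + 1) := ⟨v + 1, ⟨hv1, le_refl _⟩, hγper v⟩
    have d1 := Metric.dist_le_diam_of_mem hb1 hmem1 hQa
    have d2 := Metric.dist_le_diam_of_mem hb2 hmem2 hQb
    have hm := harc v v' hvv' hv1
    rcases min_le_iff.mp hm with h | h <;> linarith
  -- extraction from thickenings
  have hKc : ∀ l r' : ℝ, IsCompact (γ '' Set.Icc l r') := fun l r' => isCompact_Icc.image hγcont
  have hSmem : ∀ l r' : ℝ, l ≤ r' → ∀ x : E2,
      x ∈ Metric.cthickening w (γ '' Set.Icc l r') → ∃ v ∈ Set.Icc l r', dist (γ v) x ≤ w := by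
    intro l r' hlr x hx
    have hne : (γ '' Set.Icc l r').Nonempty := ⟨γ l, ⟨l, ⟨le_refl _, hlr⟩, rfl⟩⟩
    obtain ⟨y, hy, hyd⟩ := (hKc l r').exists_infEdist_eq_edist hne x
    rw [Metric.mem_cthickening_iff, hyd, edist_dist] at hx
    obtain ⟨v, hv, rfl⟩ := hy
    refine ⟨v, hv, ?_⟩
    rw [dist_comm]
    exact (ENNReal.ofReal_le_ofReal_iff hw0).mp hx
  -- integer periodicity
  have hper' : ∀ (m : ℤ) (t : ℝ), γ (t + m) = γ t := by
    intro m
    induction m using Int.induction_on with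
    | zero => intro t; simp
    | succ k ih =>
        intro t
        have h1 : (t : ℝ) + ((k : ℤ) + 1 : ℤ) = (t + (k : ℤ)) + 1 := by push_cast; ring
        rw [h1, hγper, ih]
    | pred k ih =>
        intro t
        have h1 : (t : ℝ) + ((-(k:ℤ) - 1 : ℤ)) = (t - 1) + (-(k:ℤ):ℤ) := by push_cast; ring
        have h2 : (t : ℝ) - 1 + 1 = t := by ring
        rw [h1, ih (t - 1), ← h2, hγper, h2]
  -- the three closed sets
  set S1 := Metric.cthickening w (γ '' Set.Icc σ1 σ2) with hS1def
  set S2 := Metric.cthickening w (γ '' Set.Icc σ2 σ3) with hS2def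
  set S3 := Metric.cthickening w (γ '' Set.Icc σ3 (σ1 + 1)) with hS3def
  -- coverage
  have hcov : segment ℝ a b ⊆ S1 ∪ (S2 ∪ S3) := by
    intro x hx
    obtain ⟨T, hT⟩ := hwit x hx
    set τ : ℝ := T - (⌊T - σ1⌋ : ℤ) with hτdef
    have hγτ : γ τ = γ T := by
      have h := hper' (-⌊T - σ1⌋) T
      have h2 : T + ((-⌊T - σ1⌋ : ℤ) : ℝ) = τ := by push_cast [hτdef]; ring
      rw [h2] at h
      exact h
    have hτ1 : σ1 ≤ τ := by
      have := Int.floor_le (T - σ1)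
      rw [hτdef]; linarith
    have hτ2 : τ < σ1 + 1 := by
      have := Int.lt_floor_add_one (T - σ1)
      rw [hτdef]; linarith
    have hdτ : dist x (γ τ) ≤ w := by
      rw [hγτ, dist_comm]; exact hT
    rcases le_or_gt τ σ2 with h | h
    · exact Or.inl (Metric.mem_cthickening_of_dist_le x (γ τ) w _ ⟨τ, ⟨hτ1, h⟩, rfl⟩ hdτ)
    rcases le_or_gt τ σ3 with h' | h'
    · exact Or.inr (Or.inl
        (Metric.mem_cthickening_of_dist_le x (γ τ) w _ ⟨τ, ⟨h.le, h'⟩, rfl⟩ hdτ))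
    · exact Or.inr (Or.inr
        (Metric.mem_cthickening_of_dist_le x (γ τ) w _ ⟨τ, ⟨h'.le, hτ2.le⟩, rfl⟩ hdτ))
  -- pairwise disjointness on the segment (crossover argument)
  have hdj12 : ∀ x ∈ segment ℝ a b, x ∈ S1 → x ∈ S2 → False := by
    intro x hx h1 h2
    obtain ⟨v, hv, hdv⟩ := hSmem σ1 σ2 h12.le x h1
    obtain ⟨v', hv', hdv'⟩ := hSmem σ2 σ3 h23.le x h2
    have hdzz : dist (γ v) (γ v') ≤ 2 * w := by
      have ht := dist_triangle (γ v) x (γ v')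
      have hc : dist x (γ v') = dist (γ v') x := dist_comm _ _
      linarith
    have hφv : |⟪γ v - a, nn⟫| ≤ w := hφnear _ x hx hdv
    have hkey : Carc * dist (γ v) (γ v') ≤ Carc * (2 * w) :=
      mul_le_mul_of_nonneg_left hdzz hCarc0
    apply engine v v' (le_trans hv.2 hv'.1) (by linarith [hv.1, hv'.2, h31]) (γ σ2) (γ σ3)
      ⟨σ2, ⟨hv.2, hv'.1⟩, rfl⟩ ⟨σ3, ⟨hv'.2, by linarith [hv.1]⟩, rfl⟩
    · have := hfar (γ v) (γ σ2) hφv hφ2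
      linarith
    · have := hfar (γ v) (γ σ3) hφv hφ3
      linarith
  have hdj13 : ∀ x ∈ segment ℝ a b, x ∈ S1 → x ∈ S3 → False := by
    intro x hx h1 h3
    obtain ⟨v, hv, hdv⟩ := hSmem σ1 σ2 h12.le x h1
    obtain ⟨v', hv', hdv'⟩ := hSmem σ3 (σ1 + 1) (by linarith) x h3
    have hdzz : dist (γ v) (γ v') ≤ 2 * w := by
      have ht := dist_triangle (γ v) x (γ v')
      have hc : dist x (γ v') = dist (γ v') x := dist_comm _ _
      linarith
    have hφv : |⟪γ v - a, nn⟫| ≤ w := hφnear _ x hx hdv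
    have hkey : Carc * dist (γ v) (γ v') ≤ Carc * (2 * w) :=
      mul_le_mul_of_nonneg_left hdzz hCarc0
    apply engine v v' (by linarith [hv.2, hv'.1]) (by linarith [hv.1, hv'.2]) (γ σ2) (γ (σ1 + 1))
      ⟨σ2, ⟨hv.2, by linarith [hv'.1]⟩, rfl⟩ ⟨σ1 + 1, ⟨hv'.2, by linarith [hv.1]⟩, rfl⟩
    · have := hfar (γ v) (γ σ2) hφv hφ2
      linarith
    · rw [hγper σ1]
      have := hfar (γ v) (γ σ1) hφv hφ1
      linarith
  have hdj23 : ∀ x ∈ segment ℝ a b, x ∈ S2 → x ∈ S3 → False := by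
    intro x hx h2 h3
    obtain ⟨v, hv, hdv⟩ := hSmem σ2 σ3 h23.le x h2
    obtain ⟨v', hv', hdv'⟩ := hSmem σ3 (σ1 + 1) (by linarith) x h3
    have hdzz : dist (γ v) (γ v') ≤ 2 * w := by
      have ht := dist_triangle (γ v) x (γ v')
      have hc : dist x (γ v') = dist (γ v') x := dist_comm _ _
      linarith
    have hφv : |⟪γ v - a, nn⟫| ≤ w := hφnear _ x hx hdv
    have hkey : Carc * dist (γ v) (γ v') ≤ Carc * (2 * w) :=
      mul_le_mul_of_nonneg_left hdzz hCarc0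
    apply engine v v' (by linarith [hv.2, hv'.1]) (by linarith [hv.1, hv'.2, h12]) (γ σ3)
      (γ (σ1 + 1)) ⟨σ3, ⟨hv.2, hv'.1⟩, rfl⟩ ⟨σ1 + 1, ⟨hv'.2, by linarith [hv.1, h12]⟩, rfl⟩
    · have := hfar (γ v) (γ σ3) hφv hφ3
      linarith
    · rw [hγper σ1]
      have := hfar (γ v) (γ σ1) hφv hφ1
      linarith
  -- the segment is contained in a single thickening
  have hc1 : IsClosed S1 := Metric.isClosed_cthickening
  have hc2 : IsClosed S2 := Metric.isClosed_cthickening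
  have hc3 : IsClosed S3 := Metric.isClosed_cthickening
  have hpre : IsPreconnected (segment ℝ a b) := (convex_segment a b).isPreconnected
  have hsplit1 := isPreconnected_iff_subset_of_disjoint_closed.mp hpre S1 (S2 ∪ S3) hc1
    (hc2.union hc3) hcov (by
      apply Set.eq_empty_iff_forall_notMem.mpr
      rintro x ⟨hx, hx1, hx23⟩
      rcases hx23 with h2 | h3
      · exact hdj12 x hx hx1 h2
      · exact hdj13 x hx hx1 h3)
  -- final blow in each case
  rcases hsplit1 with hcase | hcase23
  · -- all witnesses in the arc [σ1, σ2]; pair γ v (near μ3) with γ σ3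
    obtain ⟨v, hv, hdv⟩ := hSmem σ1 σ2 h12.le μ3 (hcase hμ3)
    have hdz : dist (γ v) (γ σ3) ≤ w + s2 := by
      have ht := dist_triangle (γ v) μ3 (γ σ3)
      have hc : dist μ3 (γ σ3) = dist (γ σ3) μ3 := dist_comm _ _
      linarith
    have hkey : Carc * dist (γ v) (γ σ3) ≤ Carc * (s2 + w) := by
      apply mul_le_mul_of_nonneg_left (by linarith) hCarc0
    apply engine v σ3 (by linarith [hv.2]) (by linarith [hv.1]) (γ σ2) (γ (σ1 + 1))
      ⟨σ2, ⟨hv.2, h23.le⟩, rfl⟩ ⟨σ1 + 1, ⟨by linarith, by linarith [hv.1]⟩, rfl⟩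
    · have ht := dist_triangle μ3 (γ v) (γ σ2)
      have ht2 := dist_triangle μ3 (γ σ2) μ2
      have hc1' : dist μ3 (γ v) = dist (γ v) μ3 := dist_comm _ _
      have hc2' : dist μ3 μ2 = dist μ2 μ3 := dist_comm _ _
      have hc3' : dist (γ σ2) μ2 ≤ s2 := hq2
      have hd : dist μ3 μ2 ≤ dist μ3 (γ σ2) + s2 := by
        have := dist_triangle μ3 (γ σ2) μ2
        linarith
      linarith
    · rw [hγper σ1]
      have ht := dist_triangle μ3 (γ v) (γ σ1)
      have hc1' : dist μ3 (γ v) = dist (γ v) μ3 := dist_comm _ _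
      have hc2' : dist μ3 μ1 = dist μ1 μ3 := dist_comm _ _
      have hd : dist μ3 μ1 ≤ dist μ3 (γ σ1) + s2 := by
        have := dist_triangle μ3 (γ σ1) μ1
        have : dist (γ σ1) μ1 ≤ s2 := hq1
        linarith [dist_triangle μ3 (γ σ1) μ1]
      linarith
  rcases isPreconnected_iff_subset_of_disjoint_closed.mp hpre S2 S3 hc2 hc3 hcase23 (by
      apply Set.eq_empty_iff_forall_notMem.mpr
      rintro x ⟨hx, hx2, hx3⟩
      exact hdj23 x hx hx2 hx3) with hcase | hcase
  · -- all witnesses in [σ2, σ3]; pair γ σ1 with γ v (near μ1)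
    obtain ⟨v, hv, hdv⟩ := hSmem σ2 σ3 h23.le μ1 (hcase hμ1)
    have hdz : dist (γ σ1) (γ v) ≤ s2 + w := by
      have ht := dist_triangle (γ σ1) μ1 (γ v)
      have hc : dist μ1 (γ v) = dist (γ v) μ1 := dist_comm _ _
      linarith
    have hkey : Carc * dist (γ σ1) (γ v) ≤ Carc * (s2 + w) :=
      mul_le_mul_of_nonneg_left hdz hCarc0
    apply engine σ1 v (by linarith [hv.1]) (by linarith [hv.2]) (γ σ2) (γ σ3)
      ⟨σ2, ⟨h12.le, hv.1⟩, rfl⟩ ⟨σ3, ⟨hv.2, by linarith⟩, rfl⟩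
    · have ht := dist_triangle μ1 (γ σ1) (γ σ2)
      have hc1' : dist μ1 (γ σ1) = dist (γ σ1) μ1 := dist_comm _ _
      have hd : dist μ1 μ2 ≤ dist μ1 (γ σ2) + s2 := by
        have := dist_triangle μ1 (γ σ2) μ2
        linarith
      have ht2 := dist_triangle μ1 (γ σ1) (γ σ2)
      linarith
    · have hd : dist μ1 μ3 ≤ dist μ1 (γ σ3) + s2 := by
        have := dist_triangle μ1 (γ σ3) μ3
        linarith
      have ht2 := dist_triangle μ1 (γ σ1) (γ σ3)
      have hc1' : dist μ1 (γ σ1) = dist (γ σ1) μ1 := dist_comm _ _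
      linarith
  · -- all witnesses in [σ3, σ1+1]; pair γ σ2 with γ v (near μ2)
    obtain ⟨v, hv, hdv⟩ := hSmem σ3 (σ1 + 1) (by linarith) μ2 (hcase hμ2)
    have hdz : dist (γ σ2) (γ v) ≤ s2 + w := by
      have ht := dist_triangle (γ σ2) μ2 (γ v)
      have hc : dist μ2 (γ v) = dist (γ v) μ2 := dist_comm _ _
      linarith
    have hkey : Carc * dist (γ σ2) (γ v) ≤ Carc * (s2 + w) :=
      mul_le_mul_of_nonneg_left hdz hCarc0
    apply engine σ2 v (by linarith [hv.1]) (by linarith [hv.2]) (γ σ3) (γ (σ1 + 1))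
      ⟨σ3, ⟨h23.le, hv.1⟩, rfl⟩ ⟨σ1 + 1, ⟨hv.2, by linarith⟩, rfl⟩
    · have hd : dist μ2 μ3 ≤ dist μ2 (γ σ3) + s2 := by
        have := dist_triangle μ2 (γ σ3) μ3
        linarith
      have ht2 := dist_triangle μ2 (γ σ2) (γ σ3)
      have hc1' : dist μ2 (γ σ2) = dist (γ σ2) μ2 := dist_comm _ _
      linarith
    · rw [hγper σ1]
      have hd : dist μ2 μ1 ≤ dist μ2 (γ σ1) + s2 := by
        have := dist_triangle μ2 (γ σ1) μ1
        linarith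
      have ht2 := dist_triangle μ2 (γ σ2) (γ σ1)
      have hc1' : dist μ2 (γ σ2) = dist (γ σ2) μ2 := dist_comm _ _
      have hc2' : dist μ2 μ1 = dist μ1 μ2 := dist_comm _ _
      linarith

/-- **Line porosity of the limit set** (Proposition 3.5). A `δ`-regular Jordan curve
`P ⊆ B(0,10) ⊆ ℝ²` (parametrized by a continuous injective 1-periodic loop `γ`) satisfying
the three-point condition with constant `C̃_arc` is such that `X = P ∩ B(0,5)` is `ν`-porous
on lines from scales `0` to `α₁`, where `C_out = 2(4·5^δ C̃_μ²)^(1/(δ-1))`,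
`ν = 1/(200 C_out C̃_arc²)` and `α₁ = 1/(10 C_out C̃_arc)`. -/
theorem limit_set_line_porous (δ : ℝ) (hδ : δ ∈ Set.Ioo (1 : ℝ) 2)
    (γ : ℝ → EuclideanSpace ℝ (Fin 2)) (hγcont : Continuous γ)
    (hγper : ∀ t, γ (t + 1) = γ t) (hγinj : Set.InjOn γ (Set.Ico (0 : ℝ) 1))
    (P : Set (EuclideanSpace ℝ (Fin 2))) (hPγ : P = Set.range γ)
    (hPsub : P ⊆ Metric.ball 0 10)
    (μ : Measure (EuclideanSpace ℝ (Fin 2))) (Cμ Carc : ℝ)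
    (hCμ : 1 ≤ Cμ) (hCarc : 1 ≤ Carc)
    (hreg : ∀ x₀ ∈ P, ∀ r : ℝ, r ∈ Set.Icc (0 : ℝ) 1 →
      ENNReal.ofReal (Cμ⁻¹ * r ^ δ) ≤ μ (Metric.ball x₀ r ∩ P) ∧
      μ (Metric.ball x₀ r ∩ P) ≤ ENNReal.ofReal (Cμ * r ^ δ))
    (harc : ∀ t₁ t₂ : ℝ, t₁ ≤ t₂ → t₂ ≤ t₁ + 1 →
      min (Metric.diam (γ '' Set.Icc t₁ t₂)) (Metric.diam (γ '' Set.Icc t₂ (t₁ + 1))) ≤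
        Carc * dist (γ t₁) (γ t₂)) :
    ∀ a b : EuclideanSpace ℝ (Fin 2),
      0 < dist a b →
      dist a b < (10 * (2 * (4 * (5 : ℝ) ^ δ * Cμ ^ 2) ^ (1 / (δ - 1))) * Carc)⁻¹ →
      ∃ x ∈ segment ℝ a b,
        Disjoint
          (Metric.ball x
            ((200 * (2 * (4 * (5 : ℝ) ^ δ * Cμ ^ 2) ^ (1 / (δ - 1))) * Carc ^ 2)⁻¹ *
              dist a b))
          (P ∩ Metric.ball 0 5) := by
  intro a b hr0 hrlt
  by_contra hcon
  push_neg at hcon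
  obtain ⟨hδ1, hδ2⟩ := hδ
  set r : ℝ := dist a b with hrdef
  set A : ℝ := 4 * (5:ℝ) ^ δ * Cμ ^ 2 with hAdef
  set Co : ℝ := 2 * A ^ (1 / (δ - 1)) with hCodef
  have hCo40 : 40 ≤ Co := aux_Co40 hδ1 hδ2 hCμ
  have hCarc0 : (0:ℝ) < Carc := by linarith
  have hCopos : (0:ℝ) < Co := by linarith
  have h200 : (0:ℝ) < 200 * Co * Carc ^ 2 :=
    mul_pos (mul_pos (by norm_num) hCopos) (pow_pos hCarc0 2)
  set w : ℝ := (200 * Co * Carc ^ 2)⁻¹ * r with hwdef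
  have hw0 : 0 < w := mul_pos (inv_pos.mpr h200) hr0
  have hrw : r = 200 * Co * Carc ^ 2 * w := by
    rw [hwdef]
    field_simp
  -- density witnesses
  have hwit0 : ∀ x ∈ segment ℝ a b, ∃ p, p ∈ P ∧ dist p x < w := by
    intro x hx
    have h := hcon x hx
    rw [Set.not_disjoint_iff] at h
    obtain ⟨p, hp1, hp2⟩ := h
    exact ⟨p, hp2.1, Metric.mem_ball.mp hp1⟩
  -- coordinates
  set d : E2 := b - a with hddef
  have hdnorm : ‖d‖ = r := by rw [hrdef, hddef, dist_eq_norm']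
  set u : E2 := r⁻¹ • d with hudef
  have hu : ‖u‖ = 1 := by
    rw [hudef, norm_smul, hdnorm, norm_inv, Real.norm_eq_abs, abs_of_pos hr0,
      inv_mul_cancel₀ (ne_of_gt hr0)]
  set nn : E2 := (WithLp.equiv 2 (Fin 2 → ℝ)).symm ![-(u 1), u 0] with hnndef
  have hnn0 : nn 0 = -(u 1) := rfl
  have hnn1 : nn 1 = u 0 := rfl
  have hinner : ∀ x y : E2, ⟪x, y⟫ = x 0 * y 0 + x 1 * y 1 := by
    intro x y
    simp [PiLp.inner_apply, RCLike.inner_apply, conj_trivial, Fin.sum_univ_two]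
    ring
  have hnormsq : ∀ x : E2, ‖x‖ ^ 2 = x 0 ^ 2 + x 1 ^ 2 := by
    intro x
    rw [← real_inner_self_eq_norm_sq, hinner]
    ring
  have husq : u 0 ^ 2 + u 1 ^ 2 = 1 := by
    have h := hnormsq u
    rw [hu] at h
    norm_num at h
    linarith
  have hun : ⟪u, nn⟫ = 0 := by
    rw [hinner, hnn0, hnn1]
    ring
  have hnnnorm : ‖nn‖ = 1 := by
    have h := hnormsq nn
    rw [hnn0, hnn1] at h
    have h2 : ‖nn‖ ^ 2 = 1 := by rw [h]; linarith [husq]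
    nlinarith [norm_nonneg nn]
  have hcoord : ∀ v : E2, ⟪v, u⟫ ^ 2 + ⟪v, nn⟫ ^ 2 = ‖v‖ ^ 2 := by
    intro v
    rw [hinner, hinner, hnn0, hnn1, hnormsq]
    have expand : (v 0 * u 0 + v 1 * u 1) ^ 2 + (v 0 * -(u 1) + v 1 * (u 0)) ^ 2
        = (v 0 ^ 2 + v 1 ^ 2) * (u 0 ^ 2 + u 1 ^ 2) := by ring
    rw [expand, husq, mul_one]
  have hdru : d = r • u := by
    rw [hudef, smul_smul, mul_inv_cancel₀ (ne_of_gt hr0), one_smul]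
  have hseg0 : ∀ x ∈ segment ℝ a b, ⟪x - a, nn⟫ = 0 := by
    intro x hx
    rw [segment_eq_image'] at hx
    obtain ⟨θ, hθ, rfl⟩ := hx
    have he : a + θ • (b - a) - a = θ • d := by rw [hddef]; abel
    rw [he, real_inner_smul_left, hdru, real_inner_smul_left, hun]
    ring
  -- lipschitz height
  have hlip : ∀ y z : E2, |⟪y - a, nn⟫ - ⟪z - a, nn⟫| ≤ dist y z := by
    intro y z
    have h1 : ⟪y - a, nn⟫ - ⟪z - a, nn⟫ = ⟪y - z, nn⟫ := by
      rw [← inner_sub_left]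
      congr 1
      abel
    rw [h1, dist_eq_norm]
    calc |⟪y - z, nn⟫| ≤ ‖y - z‖ * ‖nn‖ := abs_real_inner_le_norm _ _
      _ = ‖y - z‖ := by rw [hnnnorm, mul_one]
  have hφnear : ∀ z x : E2, x ∈ segment ℝ a b → dist z x ≤ w → |⟪z - a, nn⟫| ≤ w := by
    intro z x hx hd
    have h := hlip z x
    rw [hseg0 x hx, sub_zero] at h
    linarith
  -- quarter points
  have hmem : ∀ θ : ℝ, 0 ≤ θ → θ ≤ 1 → a + θ • d ∈ segment ℝ a b := by
    intro θ h0 h1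
    rw [segment_eq_image', hddef]
    exact ⟨θ, ⟨h0, h1⟩, rfl⟩
  have hdistm : ∀ θ1 θ2 : ℝ, dist (a + θ1 • d) (a + θ2 • d) = |θ1 - θ2| * r := by
    intro θ1 θ2
    rw [dist_add_left, dist_eq_norm, ← sub_smul, norm_smul, hdnorm, Real.norm_eq_abs]
  set m1 : E2 := a + (1/4 : ℝ) • d with hm1def
  set m2 : E2 := a + (2/4 : ℝ) • d with hm2def
  set m3 : E2 := a + (3/4 : ℝ) • d with hm3def
  have hm1 : m1 ∈ segment ℝ a b := hmem _ (by norm_num) (by norm_num)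
  have hm2 : m2 ∈ segment ℝ a b := hmem _ (by norm_num) (by norm_num)
  have hm3 : m3 ∈ segment ℝ a b := hmem _ (by norm_num) (by norm_num)
  have hd12 : r / 4 ≤ dist m1 m2 := by rw [hm1def, hm2def, hdistm]; rw [show |(1/4 : ℝ) - 2/4| = 1/4 by norm_num]; linarith
  have hd13 : r / 4 ≤ dist m1 m3 := by rw [hm1def, hm3def, hdistm]; rw [show |(1/4 : ℝ) - 3/4| = 1/2 by norm_num]; linarith
  have hd23 : r / 4 ≤ dist m2 m3 := by rw [hm2def, hm3def, hdistm]; rw [show |(2/4 : ℝ) - 3/4| = 1/4 by norm_num]; linarith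
    -- scale for non-flatness
  have hr1 : r < 1 := by
    have h10 : (1:ℝ) ≤ 10 * Co * Carc := by nlinarith
    have := inv_le_one_of_one_le₀ h10
    linarith
  set ss : ℝ := r / (16 * Carc) with hssdef
  have hss0 : 0 < ss := by
    rw [hssdef]
    positivity
  have hss1 : ss ≤ 1 := by
    rw [hssdef, div_le_one (by positivity)]
    nlinarith
  set s2 : ℝ := ss + w with hs2def
  have hs2nn : 0 ≤ s2 := by positivity
  set H : ℝ := ss / Co - w with hHdef
  -- key numeric relations
  have hsCo : ss / Co = 25 / 2 * (Carc * w) := by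
    rw [hssdef, hrw]
    field_simp
    ring
  have hssval : ss = 25 / 2 * (Co * (Carc * w)) := by
    rw [hssdef, hrw]
    field_simp
    ring
  have hcw : w ≤ Carc * w := by nlinarith
  clear_value A Co w ss s2 H r d u nn m1 m2 m3
  have hcwpos : 0 < Carc * w := by positivity
  have hHw : Carc * (2 * w) < H - 2 * w := by
    rw [hHdef, hsCo]
    linarith only [hcw, hcwpos]
  have hCarcsq : Carc ≤ Carc ^ 2 := le_self_pow₀ (by linarith) (by norm_num)
  have hCarcsq1 : (1:ℝ) ≤ Carc ^ 2 := by
    have := pow_le_pow_left₀ (by norm_num : (0:ℝ) ≤ 1) hCarc 2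
    simpa using this
  have e6 : Carc ^ 2 * w ≤ Co * (Carc ^ 2 * w) :=
    le_mul_of_one_le_left (by positivity) (by linarith)
  have f1 : Carc * w ≤ Co * (Carc ^ 2 * w) :=
    le_trans (mul_le_mul_of_nonneg_right hCarcsq hw0.le) e6
  have f2 : Co * (Carc * w) ≤ Co * (Carc ^ 2 * w) :=
    mul_le_mul_of_nonneg_left (mul_le_mul_of_nonneg_right hCarcsq hw0.le) hCopos.le
  have f3 : w ≤ Co * (Carc ^ 2 * w) :=
    le_trans (le_mul_of_one_le_left hw0.le hCarcsq1) e6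
  have hpos : 0 < Co * (Carc ^ 2 * w) := by positivity
  have hfin : Carc * (s2 + w) < r / 4 - 2 * s2 - 2 * w := by
    rw [hs2def, hssval, hrw]
    linarith only [f1, f2, f3, hpos]
  have h2s2 : 2 * s2 < r / 4 := by
    rw [hs2def, hssval, hrw]
    linarith only [f2, f3, hpos]
  -- witnesses near the quarter points and non-flatness points
  have getq : ∀ m' : E2, m' ∈ segment ℝ a b →
      ∃ q : E2, q ∈ P ∧ dist q m' ≤ s2 ∧ H ≤ |⟪q - a, nn⟫| := by
    intro m' hm'
    obtain ⟨p, hpP, hpd⟩ := hwit0 m' hm'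
    obtain ⟨q, hqP, hqdist, hqφ⟩ := nonflat hδ1 hδ2 hCμ hreg u nn hu hun hcoord p hpP ss hss0 hss1
    refine ⟨q, hqP, ?_, ?_⟩
    · have := dist_triangle q p m'
      rw [hs2def]
      linarith
    · have hφp : |⟪p - a, nn⟫| ≤ w := hφnear p m' hm' hpd.le
      have hsum : ⟪q - p, nn⟫ = ⟪q - a, nn⟫ - ⟪p - a, nn⟫ := by
        rw [← inner_sub_left]
        congr 1
        abel
      have habs : |⟪q - p, nn⟫| ≤ |⟪q - a, nn⟫| + |⟪p - a, nn⟫| := by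
        rw [hsum, sub_eq_add_neg]
        exact (abs_add_le _ _).trans (by rw [abs_neg])
      rw [hHdef]
      have hqφ' : ss / Co ≤ |⟪q - p, nn⟫| := by
        rw [hCodef, hAdef]
        exact hqφ
      linarith
  obtain ⟨q1, hq1P, hq1d, hq1φ⟩ := getq m1 hm1
  obtain ⟨q2, hq2P, hq2d, hq2φ⟩ := getq m2 hm2
  obtain ⟨q3, hq3P, hq3d, hq3φ⟩ := getq m3 hm3
  -- parameters in [0,1)
  have getparam : ∀ q : E2, q ∈ P → ∃ t : ℝ, 0 ≤ t ∧ t < 1 ∧ γ t = q := by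
    intro q hq
    rw [hPγ] at hq
    obtain ⟨T, hT⟩ := hq
    refine ⟨T - (⌊T⌋ : ℤ), by linarith [Int.floor_le T], by linarith [Int.lt_floor_add_one T], ?_⟩
    have h := per_int γ hγper (-⌊T⌋) T
    have h2 : T + ((-⌊T⌋ : ℤ) : ℝ) = T - (⌊T⌋ : ℤ) := by push_cast; ring
    rw [h2] at h
    rw [h, hT]
  obtain ⟨t1, ht10, ht11, hγt1⟩ := getparam q1 hq1P
  obtain ⟨t2, ht20, ht21, hγt2⟩ := getparam q2 hq2P
  obtain ⟨t3, ht30, ht31, hγt3⟩ := getparam q3 hq3P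
  -- distinctness
  have hqne : ∀ (qi qj mi mj : E2), dist qi mi ≤ s2 → dist qj mj ≤ s2 →
      r / 4 ≤ dist mi mj → qi ≠ qj := by
    intro qi qj mi mj h1 h2 h3 he
    have ht := dist_triangle mi qi mj
    have hc1 : dist mi qi = dist qi mi := dist_comm _ _
    have ht2 : dist qi mj = dist qj mj := by rw [he]
    linarith
  have hne12 : t1 ≠ t2 := fun he => hqne q1 q2 m1 m2 hq1d hq2d hd12 (by rw [← hγt1, ← hγt2, he])
  have hne13 : t1 ≠ t3 := fun he => hqne q1 q3 m1 m3 hq1d hq3d hd13 (by rw [← hγt1, ← hγt3, he])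
  have hne23 : t2 ≠ t3 := fun he => hqne q2 q3 m2 m3 hq2d hq3d hd23 (by rw [← hγt2, ← hγt3, he])
  -- witnesses for the core lemma
  have hwit : ∀ x ∈ segment ℝ a b, ∃ T : ℝ, dist (γ T) x ≤ w := by
    intro x hx
    obtain ⟨p, hpP, hpd⟩ := hwit0 x hx
    rw [hPγ] at hpP
    obtain ⟨T, hT⟩ := hpP
    exact ⟨T, by rw [hT]; exact hpd.le⟩
  -- sorted application of the core lemma
  have final : ∀ (ta tb tc : ℝ) (qa qb qc ma mb mc : E2),
      0 ≤ ta → tc < 1 → ta < tb → tb < tc →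
      γ ta = qa → γ tb = qb → γ tc = qc →
      ma ∈ segment ℝ a b → mb ∈ segment ℝ a b → mc ∈ segment ℝ a b →
      dist qa ma ≤ s2 → dist qb mb ≤ s2 → dist qc mc ≤ s2 →
      H ≤ |⟪qa - a, nn⟫| → H ≤ |⟪qb - a, nn⟫| → H ≤ |⟪qc - a, nn⟫| →
      r / 4 ≤ dist ma mb → r / 4 ≤ dist ma mc → r / 4 ≤ dist mb mc → False := by
    intro ta tb tc qa qb qc ma mb mc h0 hlt1 hab' hbc' hga hgb hgc hma hmb hmc
      hda hdb hdc hpa hpb hpc hab2 hac2 hbc2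
    refine core_blow γ hγcont hγper Carc hCarc harc a b nn hnnnorm w H s2 (r / 4) hw0.le
      hseg0 hwit ta tb tc h0 hab' hbc' hlt1 ma mb mc hma hmb hmc ?_ ?_ ?_ ?_ ?_ ?_
      hab2 hac2 hbc2 hs2nn hHw hfin
    · rw [hga]; exact hda
    · rw [hgb]; exact hdb
    · rw [hgc]; exact hdc
    · rw [hga]; exact hpa
    · rw [hgb]; exact hpb
    · rw [hgc]; exact hpc
  have hd21 : r / 4 ≤ dist m2 m1 := by rw [dist_comm]; exact hd12
  have hd31 : r / 4 ≤ dist m3 m1 := by rw [dist_comm]; exact hd13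
  have hd32 : r / 4 ≤ dist m3 m2 := by rw [dist_comm]; exact hd23
  rcases hne12.lt_or_gt with h12 | h12 <;> rcases hne13.lt_or_gt with h13 | h13 <;>
    rcases hne23.lt_or_gt with h23 | h23
  · exact final t1 t2 t3 q1 q2 q3 m1 m2 m3 ht10 ht31 h12 h23 hγt1 hγt2 hγt3
      hm1 hm2 hm3 hq1d hq2d hq3d hq1φ hq2φ hq3φ hd12 hd13 hd23
  · exact final t1 t3 t2 q1 q3 q2 m1 m3 m2 ht10 ht21 h13 h23 hγt1 hγt3 hγt2
      hm1 hm3 hm2 hq1d hq3d hq2d hq1φ hq3φ hq2φ hd13 hd12 hd32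
  · linarith
  · exact final t3 t1 t2 q3 q1 q2 m3 m1 m2 ht30 ht21 h13 h12 hγt3 hγt1 hγt2
      hm3 hm1 hm2 hq3d hq1d hq2d hq3φ hq1φ hq2φ hd31 hd32 hd12
  · exact final t2 t1 t3 q2 q1 q3 m2 m1 m3 ht20 ht31 h12 h13 hγt2 hγt1 hγt3
      hm2 hm1 hm3 hq2d hq1d hq3d hq2φ hq1φ hq3φ hd21 hd23 hd13
  · linarith
  · exact final t2 t3 t1 q2 q3 q1 m2 m3 m1 ht20 ht11 h23 h13 hγt2 hγt3 hγt1
      hm2 hm3 hm1 hq2d hq3d hq1d hq2φ hq3φ hq1φ hd23 hd21 hd31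
  · exact final t3 t2 t1 q3 q2 q1 m3 m2 m1 ht30 ht11 h23 h12 hγt3 hγt2 hγt1
      hm3 hm2 hm1 hq3d hq2d hq1d hq3φ hq2φ hq1φ hd32 hd31 hd21
end
end

section
/- Let δ ∈ (1,2), let P ⊂ ℝ² be a set equipped with a Borel measure μ and a constant C̃_μ ≥ 1 such that (1/C̃_μ) r^δ ≤ μ(B(x₀,r) ∩ P) ≤ C̃_μ r^δ for all x₀ ∈ P and r ∈ [0,1]. Set C_out = 2(4·5^δ C̃_μ²)^{1/(δ−1)}. Then for every point x ∈ P, every line L ⊂ ℝ², and every r ∈ (0, 1/2), there exists a point y ∈ B(x,r) ∩ P such that dist(y, L) ≥ r/C_out. -/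
open MeasureTheory Metric Set Function
open scoped ENNReal Pointwise

noncomputable section

set_option maxHeartbeats 1000000 in
/-- **Non-concentration near lines** (Lemma 3.6). A `δ`-regular set `P ⊆ ℝ²` with `δ > 1`
cannot concentrate near a line: for every `x ∈ P`, line `L = {p + t v}` and `r ∈ (0, 1/2)`
there is `y ∈ B(x,r) ∩ P` with `dist(y, L) ≥ r / C_out`, `C_out = 2(4·5^δ C̃_μ²)^(1/(δ-1))`. -/
theorem nonconcentration_near_lines (δ : ℝ) (hδ : δ ∈ Set.Ioo (1 : ℝ) 2)
    (P : Set (EuclideanSpace ℝ (Fin 2)))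
    (μ : Measure (EuclideanSpace ℝ (Fin 2))) (Cμ : ℝ) (hCμ : 1 ≤ Cμ)
    (hreg : ∀ x₀ ∈ P, ∀ r : ℝ, r ∈ Set.Icc (0 : ℝ) 1 →
      ENNReal.ofReal (Cμ⁻¹ * r ^ δ) ≤ μ (Metric.ball x₀ r ∩ P) ∧
      μ (Metric.ball x₀ r ∩ P) ≤ ENNReal.ofReal (Cμ * r ^ δ)) :
    ∀ x ∈ P, ∀ p v : EuclideanSpace ℝ (Fin 2), v ≠ 0 →
      ∀ r : ℝ, 0 < r → r < 1 / 2 →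
        ∃ y ∈ Metric.ball x r ∩ P,
          r / (2 * (4 * (5 : ℝ) ^ δ * Cμ ^ 2) ^ (1 / (δ - 1))) ≤
            Metric.infDist y {z | ∃ t : ℝ, z = p + t • v} := by
  obtain ⟨hδ1, hδ2⟩ := hδ
  intro x hx p v hv r hr hr2
  have hCμ0 : (0:ℝ) < Cμ := lt_of_lt_of_le one_pos hCμ
  set A : ℝ := 4 * (5 : ℝ) ^ δ * Cμ ^ 2 with hAdef
  have h5 : (5:ℝ) ≤ (5:ℝ) ^ δ := by
    calc (5:ℝ) = 5 ^ (1:ℝ) := (Real.rpow_one 5).symm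
    _ ≤ 5 ^ δ := Real.rpow_le_rpow_of_exponent_le (by norm_num) hδ1.le
  have hCμ2 : (1:ℝ) ≤ Cμ ^ 2 := by nlinarith
  have hA20 : (20:ℝ) ≤ A := by rw [hAdef]; nlinarith
  have hexp1 : (1:ℝ) ≤ 1/(δ-1) := by
    rw [le_div_iff₀ (by linarith)]; linarith
  have hA1 : A ≤ A ^ (1/(δ-1)) := by
    calc A = A ^ (1:ℝ) := (Real.rpow_one A).symm
    _ ≤ A ^ (1/(δ-1)) := Real.rpow_le_rpow_of_exponent_le (by linarith) hexp1
  set C : ℝ := 2 * A ^ (1/(δ-1)) with hCdef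
  have hC40 : (40:ℝ) ≤ C := by rw [hCdef]; linarith
  have hC0 : (0:ℝ) < C := by linarith
  by_contra hcon
  push_neg at hcon
  set ε : ℝ := r / C with hεdef
  have hε0 : 0 < ε := div_pos hr hC0
  have hεC : ε * C = r := by rw [hεdef]; field_simp
  have hεr : 40 * ε ≤ r := by nlinarith
  have h5ε : 5 * ε ≤ 1 := by nlinarith
  -- line setup
  have hvn : (0:ℝ) < ‖v‖ := norm_pos_iff.mpr hv
  set u : EuclideanSpace ℝ (Fin 2) := ‖v‖⁻¹ • v with hudef
  have hu : ‖u‖ = 1 := by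
    rw [hudef, norm_smul, norm_inv, norm_norm, inv_mul_cancel₀ hvn.ne']
  set sx : ℝ := inner (𝕜 := ℝ) (x - p) u with hsxdef
  set K : ℤ := ⌈r / (2*ε)⌉ with hKdef
  set c : ℤ → EuclideanSpace ℝ (Fin 2) := fun k => p + (sx + 2*ε*k) • u with hcdef
  -- covering
  have hcover : ball x r ∩ P ⊆ ⋃ k ∈ Finset.Icc (-K) K, (closedBall (c k) (2*ε) ∩ P) := by
    rintro y ⟨hyb, hyP⟩
    have hlt := hcon y ⟨hyb, hyP⟩
    have hLne : Set.Nonempty {z : EuclideanSpace ℝ (Fin 2) | ∃ t : ℝ, z = p + t • v} :=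
      ⟨p, ⟨0, by simp⟩⟩
    obtain ⟨z, hzL, hzd⟩ := (Metric.infDist_lt_iff hLne).mp hlt
    obtain ⟨t, rfl⟩ := hzL
    set s : ℝ := t * ‖v‖ with hsdef
    have hzu : p + t • v = p + s • u := by
      rw [hudef, smul_smul, hsdef]
      congr 2
      field_simp
    rw [hzu] at hzd
    have hsx : inner (𝕜 := ℝ) ((p + s • u) - x) u = s - sx := by
      have he : (p + s • u) - x = s • u - (x - p) := by abel
      rw [he, inner_sub_left, real_inner_smul_left, real_inner_self_eq_norm_sq, hu, ← hsxdef]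
      ring
    have habs : |s - sx| < r + ε := by
      have h1 : |s - sx| ≤ ‖(p + s • u) - x‖ := by
        rw [← hsx]
        calc |inner (𝕜 := ℝ) ((p + s • u) - x) u| ≤ ‖(p + s • u) - x‖ * ‖u‖ :=
              abs_real_inner_le_norm _ _
        _ = ‖(p + s • u) - x‖ := by rw [hu, mul_one]
      have h2 : ‖(p + s • u) - x‖ ≤ dist (p + s • u) y + dist y x := by
        rw [← dist_eq_norm]; exact dist_triangle _ _ _
      have h3 : dist (p + s • u) y < ε := by rw [dist_comm]; exact hzd
      have h4 : dist y x < r := mem_ball.mp hyb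
      linarith
    set k : ℤ := round ((s - sx)/(2*ε)) with hkdef
    have h2ε : (0:ℝ) < 2*ε := by linarith
    have hk1 : |s - sx - 2*ε*k| ≤ ε := by
      have h := abs_sub_round ((s - sx)/(2*ε))
      have he : s - sx - 2*ε*k = ((s - sx)/(2*ε) - k) * (2*ε) := by
        field_simp
      rw [he, abs_mul, abs_of_pos h2ε]
      nlinarith
    have hkK : k ∈ Finset.Icc (-K) K := by
      have h3 : 2*ε*|(k:ℝ)| < r + 2*ε := by
        have he : 2*ε*|(k:ℝ)| = |2*ε*(k:ℝ)| := by rw [abs_mul, abs_of_pos h2ε]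
        have ht : |2*ε*(k:ℝ)| ≤ |s - sx - 2*ε*k| + |s - sx| := by
          have := abs_sub (s - sx - 2*ε*k) (s - sx)
          calc |2*ε*(k:ℝ)| = |(s - sx - 2*ε*k) - (s - sx)| := by
                rw [show (s - sx - 2*ε*(k:ℝ)) - (s - sx) = -(2*ε*(k:ℝ)) by ring, abs_neg]
          _ ≤ |s - sx - 2*ε*k| + |s - sx| := (abs_sub _ _)
        rw [he]; linarith
      have hceil : r/(2*ε) ≤ (K:ℝ) := Int.le_ceil _
      have hrK : r ≤ 2*ε*(K:ℝ) := by
        rw [div_le_iff₀ h2ε] at hceil; linarith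
      have h4 : (|k| : ℝ) < (K:ℝ) + 1 := by
        have h7 : 2*ε*|(k:ℝ)| < 2*ε*((K:ℝ)+1) := by nlinarith
        exact lt_of_mul_lt_mul_left h7 h2ε.le
      have h5' : |k| < K + 1 := by exact_mod_cast h4
      have h6 : |k| ≤ K := Int.lt_add_one_iff.mp h5'
      rw [Finset.mem_Icc]
      exact abs_le.mp h6
    have hdzc : dist (p + s • u) (c k) = |s - sx - 2*ε*k| := by
      rw [hcdef, dist_eq_norm]
      have he : (p + s • u) - (p + (sx + 2*ε*(k:ℝ)) • u) = (s - (sx + 2*ε*(k:ℝ))) • u := by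
        rw [sub_smul]; abel
      rw [he, norm_smul, hu, mul_one, Real.norm_eq_abs]
      congr 1; ring
    refine Set.mem_biUnion hkK ⟨?_, hyP⟩
    rw [mem_closedBall]
    calc dist y (c k) ≤ dist y (p + s • u) + dist (p + s • u) (c k) := dist_triangle _ _ _
    _ ≤ ε + ε := by
        rw [hdzc]
        have : dist y (p + s • u) < ε := hzd
        linarith
    _ = 2*ε := by ring
  -- measure bounds
  have hterm : ∀ k ∈ Finset.Icc (-K) K,
      μ (closedBall (c k) (2*ε) ∩ P) ≤ ENNReal.ofReal (Cμ * (5*ε) ^ δ) := by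
    intro k _
    rcases (closedBall (c k) (2*ε) ∩ P).eq_empty_or_nonempty with he | ⟨q, hq⟩
    · simp [he]
    · have hsub2 : closedBall (c k) (2*ε) ∩ P ⊆ ball q (5*ε) ∩ P := by
        rintro w ⟨hw1, hw2⟩
        refine ⟨?_, hw2⟩
        rw [mem_ball]
        have h1 : dist w (c k) ≤ 2*ε := mem_closedBall.mp hw1
        have h2 : dist q (c k) ≤ 2*ε := mem_closedBall.mp hq.1
        have := dist_triangle w (c k) q
        rw [dist_comm (c k) q] at this
        linarith
      exact (measure_mono hsub2).trans (hreg q hq.2 (5*ε) ⟨by positivity, h5ε⟩).2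
  have hupper : μ (ball x r ∩ P) ≤
      ((Finset.Icc (-K) K).card : ℝ≥0∞) * ENNReal.ofReal (Cμ * (5*ε) ^ δ) := by
    calc μ (ball x r ∩ P) ≤ ∑ k ∈ Finset.Icc (-K) K, μ (closedBall (c k) (2*ε) ∩ P) :=
          (measure_mono hcover).trans (measure_biUnion_finset_le _ _)
    _ ≤ ∑ _k ∈ Finset.Icc (-K) K, ENNReal.ofReal (Cμ * (5*ε) ^ δ) := Finset.sum_le_sum hterm
    _ = ((Finset.Icc (-K) K).card : ℝ≥0∞) * ENNReal.ofReal (Cμ * (5*ε) ^ δ) := by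
        rw [Finset.sum_const, nsmul_eq_mul]
  have hlower := (hreg x hx r ⟨hr.le, by linarith⟩).1
  have hK0 : (0:ℤ) ≤ K := Int.ceil_nonneg (by positivity)
  have hKle : (K:ℝ) < C/2 + 1 := by
    have h1 : (K:ℝ) < r/(2*ε) + 1 := Int.ceil_lt_add_one _
    have h2 : r/(2*ε) = C/2 := by
      rw [hεdef]; field_simp
    linarith [h2 ▸ h1]
  have hcard : ((Finset.Icc (-K) K).card : ℝ) ≤ C + 3 := by
    rw [Int.card_Icc]
    have h1 : K + 1 - (-K) = 2*K + 1 := by ring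
    rw [h1]
    have hnn : (0:ℤ) ≤ 2*K+1 := by linarith
    have h2 : ((2*K+1).toNat : ℝ) = 2*(K:ℝ)+1 := by
      rw [show ((2*K+1).toNat : ℝ) = (((2*K+1).toNat : ℤ) : ℝ) from by push_cast; ring,
        Int.toNat_of_nonneg hnn]
      push_cast; ring
    rw [h2]; linarith
  -- combine
  have hδpos : (0:ℝ) ≤ Cμ * (5*ε) ^ δ := by positivity
  have hkey : Cμ⁻¹ * r ^ δ ≤ (C+3) * (Cμ * (5*ε) ^ δ) := by
    have h1 : ENNReal.ofReal (Cμ⁻¹ * r ^ δ) ≤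
        ENNReal.ofReal ((C+3) * (Cμ * (5*ε) ^ δ)) := by
      refine hlower.trans (hupper.trans ?_)
      rw [← ENNReal.ofReal_natCast ((Finset.Icc (-K) K).card),
        ← ENNReal.ofReal_mul (Nat.cast_nonneg _)]
      exact ENNReal.ofReal_le_ofReal (mul_le_mul_of_nonneg_right hcard hδpos)
    exact (ENNReal.ofReal_le_ofReal_iff (by positivity)).mp h1
  -- final arithmetic contradiction
  have hA0 : (0:ℝ) ≤ A := by linarith
  have hCd : C ^ (δ-1) = 2 ^ (δ-1) * A := by
    rw [hCdef, Real.mul_rpow (by norm_num) (Real.rpow_nonneg hA0 _),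
      ← Real.rpow_mul hA0, one_div, inv_mul_cancel₀ (by linarith : δ - 1 ≠ 0), Real.rpow_one]
  have h2d : (1:ℝ) ≤ 2 ^ (δ-1) := by
    calc (1:ℝ) = 2 ^ (0:ℝ) := (Real.rpow_zero 2).symm
    _ ≤ 2 ^ (δ-1) := Real.rpow_le_rpow_of_exponent_le (by norm_num) (by linarith)
  have hεδ : (5*ε) ^ δ = 5 ^ δ * ε ^ δ := Real.mul_rpow (by norm_num) hε0.le
  have hεCδ : ε ^ δ * C ^ δ = r ^ δ := by
    rw [← Real.mul_rpow hε0.le hC0.le, hεC]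
  have hCδ : C ^ δ = C ^ (δ-1) * C := by
    have h : δ - 1 + 1 = δ := by ring
    rw [← h, Real.rpow_add_one hC0.ne']
    ring_nf
  have hrδ : r ^ δ = ε ^ δ * (2 ^ (δ-1) * A) * C := by
    rw [← hεCδ, hCδ, hCd]; ring
  have hεδpos : (0:ℝ) < ε ^ δ := Real.rpow_pos_of_pos hε0 δ
  have h1 : r ^ δ ≤ (C+3) * Cμ^2 * 5 ^ δ * ε ^ δ := by
    have h2 := mul_le_mul_of_nonneg_left hkey hCμ0.le
    rw [hεδ] at h2
    have h3 : Cμ * (Cμ⁻¹ * r ^ δ) = r ^ δ := by field_simp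
    nlinarith [h2]
  have h2' : (2 ^ (δ-1) * A * C) * ε ^ δ ≤ ((C+3) * Cμ^2 * 5 ^ δ) * ε ^ δ := by
    nlinarith [h1, hrδ]
  have h3 : 2 ^ (δ-1) * A * C ≤ (C+3) * Cμ^2 * 5 ^ δ :=
    le_of_mul_le_mul_right h2' hεδpos
  have hAC : A * C ≤ 2 ^ (δ-1) * (A * C) :=
    le_mul_of_one_le_left (by positivity) h2d
  have h4 : A * C ≤ (C+3) * Cμ^2 * 5 ^ δ := by nlinarith [hAC, h3]
  have hB : (0:ℝ) < Cμ^2 * 5 ^ δ := by positivity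
  rw [hAdef] at h4
  nlinarith [h4, hB, hC40]
end
end

section
/- Let X ⊂ ℝ^d be ν-porous on lines from scales α₀ to α₁, let α₀ < r < α₁ and let 0 < ν' < ν. Then the neighborhood X + B(0,r) is ν'-porous on lines from scales r/(ν − ν') to α₁. -/
open MeasureTheory Metric Set Function
open scoped ENNReal Pointwise

noncomputable section

set_option maxHeartbeats 1000000 in
/-- **Porosity of neighborhoods** (Lemma A.2(a)): if `X` is `ν`-porous on lines from scales
`α₀` to `α₁`, `α₀ < r < α₁` and `0 < ν' < ν`, then `X + B(0,r)` is `ν'`-porous on lines from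
scales `r/(ν-ν')` to `α₁`. -/
theorem porous_on_lines_nbhd {d : ℕ} (ν ν' α₀ α₁ r : ℝ)
    (X : Set (EuclideanSpace ℝ (Fin d)))
    (hpor : PorousOnLines ν α₀ α₁ X) (hr₀ : α₀ < r) (hr₁ : r < α₁)
    (hν'₀ : 0 < ν') (hν' : ν' < ν) :
    PorousOnLines ν' (r / (ν - ν')) α₁ (X + Metric.closedBall 0 r) := by
  intro a b hab1 hab2
  set R := dist a b with hRdef
  have hνν' : 0 < ν - ν' := by linarith
  have hrR : r < (ν - ν') * R := by
    rw [div_lt_iff₀ hνν'] at hab1; linarith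
  rcases eq_or_lt_of_le (dist_nonneg : (0:ℝ) ≤ R) with h0 | hRpos
  · refine ⟨a, left_mem_segment ℝ a b, ?_⟩
    have hR0 : R = 0 := by rw [hRdef, ← h0]
    have : Metric.ball a (ν' * R) = ∅ := Metric.ball_eq_empty.2 (by rw [hR0, mul_zero])
    rw [this]; exact empty_disjoint _
  set R' := max R ((α₀ + r)/2) with hR'def
  have hR'R : R ≤ R' := le_max_left _ _
  have hR'0 : α₀ < R' := lt_of_lt_of_le (by linarith) (le_max_right _ _)
  have hR'1 : R' < α₁ := max_lt hab2 (by linarith)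
  have hR'pos : 0 < R' := lt_of_lt_of_le hRpos hR'R
  have hRne : R ≠ 0 := ne_of_gt hRpos
  set a' := a + ((R - R')/(2*R)) • (b - a) with ha'
  set b' := a + ((R + R')/(2*R)) • (b - a) with hb'
  have hba : ‖b - a‖ = R := by rw [hRdef, dist_comm, dist_eq_norm]
  have hb'a' : b' - a' = (R'/R) • (b - a) := by
    rw [ha', hb']
    have h : (R + R')/(2*R) - (R - R')/(2*R) = R'/R := by field_simp; ring
    rw [add_sub_add_left_eq_sub, ← sub_smul, h]
  have hdist' : dist a' b' = R' := by
    rw [dist_eq_norm', hb'a', norm_smul, hba, Real.norm_eq_abs,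
      abs_of_nonneg (div_nonneg hR'pos.le hRpos.le)]
    field_simp
    exact hRdef
  obtain ⟨x', hx'seg, hx'dis⟩ := hpor a' b' (by rw [hdist']; exact hR'0)
    (by rw [hdist']; exact hR'1)
  rw [hdist'] at hx'dis
  rw [segment_eq_image'] at hx'seg
  obtain ⟨s, hs, hx'⟩ := hx'seg
  simp only [Set.mem_Icc] at hs
  set c := (R - R')/(2*R) + s * (R'/R) with hc
  have hx'' : x' = a + c • (b - a) := by
    rw [← hx', hb'a', ha', hc]
    module
  set ct := max 0 (min 1 c) with hct
  set x := a + ct • (b - a) with hx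
  have hxseg : x ∈ segment ℝ a b := by
    rw [segment_eq_image']
    refine ⟨ct, Set.mem_Icc.2 ⟨le_max_left _ _, max_le zero_le_one (min_le_left _ _)⟩, rfl⟩
  have hR'Rn : 0 ≤ R'/R := div_nonneg hR'pos.le hRpos.le
  have hc1 : (R - R')/(2*R) ≤ c := by
    rw [hc]; nlinarith [hs.1]
  have hc2 : c ≤ (R + R')/(2*R) := by
    have : c ≤ (R - R')/(2*R) + R'/R := by rw [hc]; nlinarith [hs.2]
    have h2 : (R - R')/(2*R) + R'/R = (R + R')/(2*R) := by field_simp; ring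
    linarith [h2 ▸ this]
  have habs : |ct - c| ≤ (R' - R)/(2*R) := by
    have hnn : 0 ≤ (R' - R)/(2*R) := div_nonneg (by linarith) (by linarith)
    rcases le_or_gt c 0 with h | h
    · have hm : min 1 c = c := min_eq_right (h.trans zero_le_one)
      have : ct = 0 := by rw [hct, hm]; exact max_eq_left h
      rw [this, zero_sub, abs_neg, abs_of_nonpos h]
      have : (R - R')/(2*R) = -((R' - R)/(2*R)) := by ring
      linarith [this ▸ hc1]
    · rcases le_or_gt c 1 with h1 | h1
      · have : ct = c := by rw [hct, min_eq_right h1, max_eq_right h.le]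
        rw [this, sub_self, abs_zero]; exact hnn
      · have : ct = 1 := by rw [hct, min_eq_left h1.le]; exact max_eq_right zero_le_one
        rw [this, abs_of_nonpos (by linarith)]
        have h2 : (R + R')/(2*R) - 1 = (R' - R)/(2*R) := by field_simp; ring
        linarith [h2 ▸ (sub_le_sub_right hc2 1)]
  have hdxx' : dist x x' ≤ (R' - R)/2 := by
    have hxd : x - x' = (ct - c) • (b - a) := by rw [hx, hx'']; module
    rw [dist_eq_norm, hxd, norm_smul, Real.norm_eq_abs, hba]
    calc |ct - c| * R ≤ (R' - R)/(2*R) * R := by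
          exact mul_le_mul_of_nonneg_right habs hRpos.le
      _ = (R' - R)/2 := by field_simp
  have hDnn : (0:ℝ) ≤ dist x x' := dist_nonneg
  have key : dist x x' + (ν' * R + r) ≤ ν * R' := by
    rcases max_cases R ((α₀ + r)/2) with ⟨he, _⟩ | ⟨he, hlt⟩
    · have he' : R' = R := by rw [hR'def, he]
      rw [he'] at hdxx' ⊢
      linarith [hdxx']
    · have hRr : R < r := by linarith [hlt]
      have hrpos : 0 < r := hRpos.trans hRr
      have hν1 : 1 < ν := by nlinarith [hrR, hRpos, hRr]
      have h1 : dist x x' ≤ ν * (R' - R) := by nlinarith [hdxx', hR'R]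
      nlinarith [hrR]
  refine ⟨x, hxseg, ?_⟩
  rw [Set.disjoint_left]
  intro y hy hymem
  rw [Set.mem_add] at hymem
  obtain ⟨z, hz, w, hw, hzw⟩ := hymem
  have hwn : ‖w‖ ≤ r := by rwa [Metric.mem_closedBall, dist_zero_right] at hw
  have hdzy : dist z y = ‖w‖ := by
    rw [dist_eq_norm, ← hzw]
    simp
  have hdyx : dist y x < ν' * R := Metric.mem_ball.1 hy
  have hdzx' : dist z x' < ν * R' := by
    calc dist z x' ≤ dist z y + dist y x + dist x x' := dist_triangle4 z y x x'
      _ < ν * R' := by rw [hdzy]; linarith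
  exact Set.disjoint_left.1 hx'dis (Metric.mem_ball.2 hdzx') hz
end
end

section
/- There exists a constant C_d > 0 depending only on the dimension d with the following property. Let X ⊂ ℝ^d be ν-porous on balls from scales α₀ to α₁ with ν ∈ (0,1), and set γ = ν^d/(C_d(1 + |log ν|)). Then for every ball B of radius R with α₀ < R < α₁, the Lebesgue outer measure of X ∩ B satisfies |X ∩ B| ≤ C_d R^d (α₀/R)^γ. -/
open MeasureTheory Metric Set Function
open scoped ENNReal Pointwise

noncomputable section

open Filter

section PorousAux

def cube {d : ℕ} (z : EuclideanSpace ℝ (Fin d)) (ℓ : ℝ) : Set (EuclideanSpace ℝ (Fin d)) :=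
  {x | ∀ i, z i ≤ x i ∧ x i ≤ z i + ℓ}


lemma volume_cube {d : ℕ} (z : EuclideanSpace ℝ (Fin d)) {ℓ : ℝ} (hℓ : 0 ≤ ℓ) :
    volume (cube z ℓ) = ENNReal.ofReal (ℓ ^ d) := by
  have h : cube z ℓ = (MeasurableEquiv.toLp 2 (Fin d → ℝ)).symm ⁻¹'
      (Set.univ.pi fun i => Icc (z i) (z i + ℓ)) := by
    ext x
    simp only [cube, Set.mem_preimage, Set.mem_pi, Set.mem_univ, forall_true_left,
      Set.mem_Icc, Set.mem_setOf_eq, MeasurableEquiv.coe_toLp_symm]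
  rw [h, (EuclideanSpace.volume_preserving_symm_measurableEquiv_toLp (Fin d)).measure_preimage
      (by measurability), volume_pi_pi]
  simp [Real.volume_Icc, ← ENNReal.ofReal_pow hℓ]


lemma coord_dist_le {d : ℕ} (x y : EuclideanSpace ℝ (Fin d)) (i : Fin d) :
    |x i - y i| ≤ dist x y := by
  rw [EuclideanSpace.dist_eq]
  have : |x i - y i| = Real.sqrt (dist (x i) (y i) ^ 2) := by
    rw [Real.sqrt_sq_eq_abs, Real.dist_eq, abs_abs]
  rw [this]
  apply Real.sqrt_le_sqrt
  exact Finset.single_le_sum (f := fun j => dist (x j) (y j) ^ 2)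
    (fun j _ => sq_nonneg _) (Finset.mem_univ i)

lemma dist_le_of_coord {d : ℕ} (x y : EuclideanSpace ℝ (Fin d)) (h : ℝ) (hh : 0 ≤ h)
    (H : ∀ i, |x i - y i| ≤ h) : dist x y ≤ d * h := by
  rw [EuclideanSpace.dist_eq]
  have h1 : ∑ i : Fin d, dist (x i) (y i) ^ 2 ≤ (d * h) ^ 2 := by
    calc ∑ i : Fin d, dist (x i) (y i) ^ 2 ≤ ∑ _i : Fin d, h ^ 2 := by
          apply Finset.sum_le_sum; intro i _
          have := H i
          rw [Real.dist_eq]; nlinarith [abs_nonneg (x i - y i)]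
      _ = d * h ^ 2 := by simp [Finset.sum_const]
      _ ≤ (d * h) ^ 2 := by
          have : (1:ℝ) ≤ d ∨ (d:ℝ) = 0 := by
            rcases Nat.eq_zero_or_pos d with h0 | h0
            · right; simp [h0]
            · left; exact_mod_cast h0
          rcases this with h1 | h1
          · nlinarith
          · simp [h1]
  calc Real.sqrt (∑ i : Fin d, dist (x i) (y i) ^ 2) ≤ Real.sqrt ((d*h)^2) :=
        Real.sqrt_le_sqrt h1
    _ = d * h := by rw [Real.sqrt_sq (by positivity)]

lemma grid_mem (N : ℕ) (δ t : ℝ) (hδ : 0 < δ) (ht0 : 0 ≤ t) (ht1 : t ≤ N * δ)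
    (hN : 1 ≤ N) : ∃ k : ℕ, k < N ∧ k * δ ≤ t ∧ t ≤ (k + 1) * δ := by
  by_cases hc : ⌊t / δ⌋₊ < N
  · refine ⟨⌊t / δ⌋₊, hc, ?_, ?_⟩
    · calc (⌊t / δ⌋₊ : ℝ) * δ ≤ (t / δ) * δ := by
            have := Nat.floor_le (by positivity : (0:ℝ) ≤ t / δ)
            nlinarith
        _ = t := by field_simp
    · have h2 : t / δ < ⌊t / δ⌋₊ + 1 := Nat.lt_floor_add_one _
      have : t < (⌊t / δ⌋₊ + 1) * δ := by
        calc t = (t / δ) * δ := by field_simp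
          _ < (⌊t / δ⌋₊ + 1) * δ := by nlinarith
      linarith [this]
  · push_neg at hc
    refine ⟨N - 1, by omega, ?_, ?_⟩
    · have h1 : ((N - 1 : ℕ) : ℝ) = (N : ℝ) - 1 := by
        have : (1:ℕ) ≤ N := hN
        push_cast [Nat.cast_sub this]; ring
      have h2 : (N : ℝ) ≤ ⌊t / δ⌋₊ := by exact_mod_cast hc
      have h3 : (⌊t / δ⌋₊ : ℝ) ≤ t / δ := Nat.floor_le (by positivity)
      rw [h1]
      have : (N : ℝ) * δ ≤ t := by
        have : (N:ℝ) ≤ t / δ := le_trans h2 h3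
        calc (N:ℝ) * δ ≤ (t/δ) * δ := by nlinarith
          _ = t := by field_simp
      nlinarith
    · have h1 : ((N - 1 : ℕ) : ℝ) + 1 = (N : ℝ) := by
        have : (1:ℕ) ≤ N := hN
        push_cast [Nat.cast_sub this]; ring
      rw [h1]; linarith

lemma grid_hole (N : ℕ) (δ t h : ℝ) (hδ : 0 < δ) (h2 : 2 * δ ≤ h) (ht0 : 0 ≤ t)
    (ht1 : t ≤ N * δ) (hN : 1 ≤ N) :
    ∃ k : ℕ, k < N ∧ t - h ≤ k * δ ∧ (k + 1) * δ ≤ t + h := by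
  by_cases hc : t ≤ h
  · exact ⟨0, by omega, by simpa using by linarith, by push_cast; linarith⟩
  · push_neg at hc
    have hpos : 0 ≤ (t - h) / δ := by
      apply div_nonneg (by linarith) hδ.le
    refine ⟨⌈(t - h) / δ⌉₊, ?_, ?_, ?_⟩
    · have h1 : (⌈(t - h) / δ⌉₊ : ℝ) < (t - h) / δ + 1 := Nat.ceil_lt_add_one hpos
      have h3 : (⌈(t - h) / δ⌉₊ : ℝ) * δ < t - h + δ := by
        calc (⌈(t - h) / δ⌉₊ : ℝ) * δ < ((t - h) / δ + 1) * δ := by nlinarith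
          _ = t - h + δ := by field_simp
      have h4 : (⌈(t - h) / δ⌉₊ : ℝ) * δ < ((N:ℝ) - 1) * δ := by nlinarith
      have h5 : (⌈(t - h) / δ⌉₊ : ℝ) < (N:ℝ) - 1 := by nlinarith
      have : (⌈(t - h) / δ⌉₊ : ℝ) < (N:ℝ) := by linarith
      exact_mod_cast this
    · have h1 : (t - h) / δ ≤ ⌈(t - h) / δ⌉₊ := Nat.le_ceil _
      calc t - h = ((t - h) / δ) * δ := by field_simp
        _ ≤ (⌈(t - h) / δ⌉₊ : ℝ) * δ := by nlinarith
    · have h1 : (⌈(t - h) / δ⌉₊ : ℝ) < (t - h) / δ + 1 := Nat.ceil_lt_add_one hpos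
      have h3 : (⌈(t - h) / δ⌉₊ : ℝ) * δ < t - h + δ := by
        calc (⌈(t - h) / δ⌉₊ : ℝ) * δ < ((t - h) / δ + 1) * δ := by nlinarith
          _ = t - h + δ := by field_simp
      nlinarith

lemma cube_subset_subcubes {d : ℕ} (N : ℕ) (hN : 1 ≤ N) (z : EuclideanSpace ℝ (Fin d))
    {ℓ : ℝ} (hℓ : 0 < ℓ) :
    cube z ℓ ⊆ ⋃ k : Fin d → Fin N,
      cube (WithLp.toLp 2 fun i => z i + (k i : ℝ) * (ℓ / N)) (ℓ / N) := by
  intro x hx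
  have hδ : 0 < ℓ / N := by positivity
  have H : ∀ i : Fin d, ∃ k : ℕ, k < N ∧ (k : ℝ) * (ℓ / N) ≤ x i - z i ∧
      x i - z i ≤ ((k : ℝ) + 1) * (ℓ / N) := by
    intro i
    apply grid_mem N (ℓ / N) (x i - z i) hδ (by linarith [(hx i).1]) ?_ hN
    have : (N : ℝ) * (ℓ / N) = ℓ := by field_simp
    rw [this]; linarith [(hx i).2]
  choose κ hκN hκ1 hκ2 using H
  refine Set.mem_iUnion.2 ⟨fun i => ⟨κ i, hκN i⟩, fun i => ⟨?_, ?_⟩⟩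
  · simpa using by linarith [hκ1 i]
  · simpa using by linarith [hκ2 i]


set_option maxHeartbeats 2000000 in
lemma porous_cube_bound {d : ℕ} (N : ℕ) (hd : 1 ≤ d) (hN : 2 ≤ N) {ν α₀ α₁ : ℝ}
    {X : Set (EuclideanSpace ℝ (Fin d))} (hν : 0 < ν)
    (hνN : 4 * d / ν ≤ N) (hα₀ : 0 ≤ α₀) (hX : PorousOnBalls ν α₀ α₁ X) :
    ∀ n : ℕ, ∀ z : EuclideanSpace ℝ (Fin d), ∀ ℓ : ℝ, 0 < ℓ → ℓ < α₁ →
      α₀ * N ^ n ≤ ℓ →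
      volume (X ∩ cube z ℓ) ≤ ENNReal.ofReal ((1 - ((N:ℝ) ^ d)⁻¹) ^ n * ℓ ^ d) := by
  have hN0 : (0:ℝ) < N := by positivity
  have hd0 : (0:ℝ) < d := by exact_mod_cast hd
  have hN2 : (2:ℝ) ≤ N := by exact_mod_cast hN
  intro n
  induction n with
  | zero =>
    intro z ℓ hℓ _ _
    simpa using (measure_mono Set.inter_subset_right).trans (volume_cube z hℓ.le).le
  | succ n ih =>
    intro z ℓ hℓ hα₁ hsc
    set δ : ℝ := ℓ / N with hδdef
    have hδ : 0 < δ := by positivity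
    have hδℓ : δ ≤ ℓ / 2 := by
      rw [hδdef, div_le_div_iff₀ hN0 two_pos]
      nlinarith
    -- porosity at scale ℓ
    have hα₀ℓ : α₀ < ℓ := by
      rcases eq_or_lt_of_le hα₀ with h | h
      · linarith
      · have h1 : α₀ * 1 ≤ α₀ * N ^ (n+1) := by
          apply mul_le_mul_of_nonneg_left _ hα₀
          exact_mod_cast Nat.one_le_iff_ne_zero.2 (by positivity)
        have h2 : (2:ℝ) ≤ N ^ (n+1) := by
          calc (2:ℝ) = (2:ℕ) := by norm_num
            _ ≤ ((N ^ (n+1) : ℕ) : ℝ) := by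
                exact_mod_cast Nat.le_trans hN (Nat.le_self_pow (by omega) N)
            _ = (N:ℝ) ^ (n+1) := by push_cast; ring
        nlinarith
    obtain ⟨x, hx, hdisj⟩ := hX (WithLp.toLp 2 fun i => z i + ℓ / 2) ℓ hα₀ℓ hα₁
    rw [Metric.mem_closedBall] at hx
    have hxcube : ∀ i, z i ≤ x i ∧ x i ≤ z i + ℓ := by
      intro i
      have h1 : |x i - (z i + ℓ / 2)| ≤ ℓ / 2 := by
        have := coord_dist_le x (WithLp.toLp 2 fun i => z i + ℓ / 2) i
        simp only [PiLp.toLp_apply] at this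
        exact this.trans hx
      rw [abs_le] at h1
      constructor <;> linarith [h1.1, h1.2]
    -- hole subcube
    set h' : ℝ := ν * ℓ / (2 * d) with hh'def
    have hh' : 0 < h' := by positivity
    have h2δ : 2 * δ ≤ h' := by
      have hνN' : 4 * (d:ℝ) ≤ ν * N := by
        rw [div_le_iff₀ hν] at hνN; nlinarith
      rw [hδdef, hh'def]
      have e1 : 2 * (ℓ / N) = 2 * ℓ / N := by ring
      rw [e1, div_le_div_iff₀ hN0 (by positivity)]
      nlinarith
    have Hole : ∀ i : Fin d, ∃ k : ℕ, k < N ∧ (x i - z i) - h' ≤ k * δ ∧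
        (k + 1) * δ ≤ (x i - z i) + h' := by
      intro i
      apply grid_hole N δ _ h' hδ h2δ (by linarith [(hxcube i).1]) ?_ (by omega)
      have : (N : ℝ) * δ = ℓ := by rw [hδdef]; field_simp
      rw [this]; linarith [(hxcube i).2]
    choose κ hκN hκ1 hκ2 using Hole
    set k₀ : Fin d → Fin N := fun i => ⟨κ i, hκN i⟩ with hk₀
    have hcell : cube (WithLp.toLp 2 fun i => z i + ((k₀ i : ℕ) : ℝ) * δ) δ ⊆ Metric.ball x (ν * ℓ) := by
      intro y hy
      rw [Metric.mem_ball]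
      have hcoord : ∀ i, |y i - x i| ≤ h' := by
        intro i
        obtain ⟨hy1, hy2⟩ := hy i
        simp only [PiLp.toLp_apply] at hy1 hy2
        rw [abs_le]
        constructor <;> [skip; skip]
        · have := hκ1 i; nlinarith [hκ2 i]
        · have := hκ2 i; nlinarith [hκ1 i]
      calc dist y x ≤ d * h' := dist_le_of_coord y x h' hh'.le hcoord
        _ = ν * ℓ / 2 := by rw [hh'def]; field_simp
        _ < ν * ℓ := by nlinarith
    have hcell0 : X ∩ cube (WithLp.toLp 2 fun i => z i + ((k₀ i : ℕ) : ℝ) * δ) δ = ∅ := by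
      rw [Set.eq_empty_iff_forall_notMem]
      rintro y ⟨hyX, hyc⟩
      exact Set.disjoint_left.1 hdisj (hcell hyc) hyX
    -- sum over subcubes
    have hcover : volume (X ∩ cube z ℓ) ≤
        ∑ k : Fin d → Fin N, volume (X ∩ cube (WithLp.toLp 2 fun i => z i + ((k i : ℕ) : ℝ) * δ) δ) := by
      refine le_trans (measure_mono ?_) (measure_iUnion_fintype_le _ _)
      intro y ⟨hyX, hyc⟩
      obtain ⟨s, ⟨k, rfl⟩, hys⟩ := cube_subset_subcubes N (by omega) z hℓ hyc
      exact Set.mem_iUnion.2 ⟨k, hyX, hys⟩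
    have hterm : ∀ k : Fin d → Fin N, k ∈ Finset.univ.erase k₀ →
        volume (X ∩ cube (WithLp.toLp 2 fun i => z i + ((k i : ℕ) : ℝ) * δ) δ) ≤
          ENNReal.ofReal ((1 - ((N:ℝ) ^ d)⁻¹) ^ n * δ ^ d) := by
      intro k _
      apply ih _ δ hδ (lt_of_le_of_lt (by linarith) hα₁)
      rw [hδdef]
      rw [le_div_iff₀ hN0]
      calc α₀ * N ^ n * N = α₀ * N ^ (n+1) := by ring
        _ ≤ ℓ := hsc
    have hsum : ∑ k : Fin d → Fin N, volume (X ∩ cube (WithLp.toLp 2 fun i => z i + ((k i : ℕ) : ℝ) * δ) δ) ≤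
        ENNReal.ofReal ((1 - ((N:ℝ) ^ d)⁻¹) ^ (n+1) * ℓ ^ d) := by
      rw [← Finset.add_sum_erase _ _ (Finset.mem_univ k₀), hcell0]
      simp only [measure_empty, zero_add]
      calc ∑ k ∈ Finset.univ.erase k₀,
            volume (X ∩ cube (WithLp.toLp 2 fun i => z i + ((k i : ℕ) : ℝ) * δ) δ)
          ≤ (Finset.univ.erase k₀).card •
            ENNReal.ofReal ((1 - ((N:ℝ) ^ d)⁻¹) ^ n * δ ^ d) :=
            Finset.sum_le_card_nsmul _ _ _ hterm
        _ = ENNReal.ofReal ((N ^ d - 1 : ℕ) * ((1 - ((N:ℝ) ^ d)⁻¹) ^ n * δ ^ d)) := by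
            rw [Finset.card_erase_of_mem (Finset.mem_univ _), Finset.card_univ,
              Fintype.card_fun, Fintype.card_fin, Fintype.card_fin]
            rw [nsmul_eq_mul, ← ENNReal.ofReal_natCast, ← ENNReal.ofReal_mul (by positivity)]
        _ ≤ ENNReal.ofReal ((1 - ((N:ℝ) ^ d)⁻¹) ^ (n+1) * ℓ ^ d) := by
            apply ENNReal.ofReal_le_ofReal
            have hcast : ((N ^ d - 1 : ℕ) : ℝ) = (N:ℝ) ^ d - 1 := by
              have : 1 ≤ N ^ d := Nat.one_le_pow _ _ (by omega)
              push_cast [Nat.cast_sub this]; ring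
            rw [hcast, hδdef]
            have hNd : (0:ℝ) < (N:ℝ) ^ d := by positivity
            rw [div_pow]
            rw [pow_succ]
            field_simp
            ring_nf
            apply le_of_eq
            ring
    exact hcover.trans hsum

lemma ball_subset_cubes {d : ℕ} (c : EuclideanSpace ℝ (Fin d)) {R : ℝ} (hR : 0 < R) :
    Metric.closedBall c R ⊆
      ⋃ ε : Fin d → Bool, cube (WithLp.toLp 2 fun i => c i - R + (if ε i then R else 0)) R := by
  intro x hx
  rw [Metric.mem_closedBall] at hx
  have hco : ∀ i, |x i - c i| ≤ R := fun i => (coord_dist_le x c i).trans hx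
  refine Set.mem_iUnion.2 ⟨fun i => decide (c i ≤ x i), fun i => ?_⟩
  have h1 := (abs_le.1 (hco i)).1
  have h2 := (abs_le.1 (hco i)).2
  dsimp only [PiLp.toLp_apply]
  beta_reduce
  rcases le_or_gt (c i) (x i) with h | h
  · have hb : (decide (c i ≤ x i)) = true := decide_eq_true h
    rw [hb, if_pos rfl]
    exact ⟨by linarith, by linarith⟩
  · have hb : (decide (c i ≤ x i)) = false := decide_eq_false (not_le.2 h)
    rw [hb, if_neg (by simp)]
    exact ⟨by linarith, by linarith⟩


end PorousAux

set_option maxHeartbeats 2000000 in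
/-- **Measure bound for ball-porous sets** (Lemma A.4): if `X` is `ν`-porous on balls from
scales `α₀` to `α₁`, then for every ball of radius `R` with `α₀ < R < α₁`,
`|X ∩ B| ≤ C_d R^d (α₀/R)^γ` with `γ = ν^d / (C_d (1 + |log ν|))`. -/
theorem measure_of_ball_porous (d : ℕ) (hd : 1 ≤ d) :
    ∃ Cd > (0 : ℝ),
      ∀ (ν α₀ α₁ : ℝ) (X : Set (EuclideanSpace ℝ (Fin d))),
        ν ∈ Set.Ioo (0 : ℝ) 1 → 0 ≤ α₀ →
        PorousOnBalls ν α₀ α₁ X →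
        ∀ (c : EuclideanSpace ℝ (Fin d)) (R : ℝ), α₀ < R → R < α₁ →
          volume (X ∩ Metric.closedBall c R) ≤
            ENNReal.ofReal
              (Cd * R ^ d * (α₀ / R) ^ (ν ^ d / (Cd * (1 + |Real.log ν|)))) := by
  have hd0 : (0:ℝ) < d := by exact_mod_cast hd
  have hd1 : (1:ℝ) ≤ d := by exact_mod_cast hd
  refine ⟨3 * 2 ^ d * (6 * d) ^ (d + 1), by positivity, ?_⟩
  set Cd : ℝ := 3 * 2 ^ d * (6 * d) ^ (d + 1) with hCd
  rintro ν α₀ α₁ X ⟨hν0, hν1⟩ hα₀ hX c R hα₀R hRα₁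
  have hR : 0 < R := lt_of_le_of_lt hα₀ hα₀R
  set L : ℝ := |Real.log ν| with hL
  have hL0 : 0 ≤ L := abs_nonneg _
  set γ : ℝ := ν ^ d / (Cd * (1 + L)) with hγ
  have hγ0 : 0 < γ := by positivity
  -- choice of N
  set N : ℕ := ⌈4 * d / ν⌉₊ + 1 with hNdef
  have hν4 : (4:ℝ) ≤ 4 * d / ν := by
    rw [le_div_iff₀ hν0]; nlinarith
  have hN2 : 2 ≤ N := by
    have : 1 ≤ ⌈4 * d / ν⌉₊ := Nat.one_le_ceil_iff.2 (by linarith)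
    omega
  have hN2' : (2:ℝ) ≤ N := by exact_mod_cast hN2
  have hN0 : (0:ℝ) < N := by linarith
  have hνN : 4 * d / ν ≤ N := by
    have h1 : (4 * d / ν : ℝ) ≤ ⌈4 * d / ν⌉₊ := Nat.le_ceil _
    have : ((⌈4 * d / ν⌉₊ : ℕ) : ℝ) ≤ (N : ℝ) := by
      rw [hNdef]; push_cast; linarith
    linarith
  have hN6 : (N : ℝ) ≤ 6 * d / ν := by
    have h1 : ((⌈4 * d / ν⌉₊ : ℕ) : ℝ) < 4 * d / ν + 1 := Nat.ceil_lt_add_one (by linarith)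
    have h2 : (N : ℝ) = (⌈4 * d / ν⌉₊ : ℝ) + 1 := by rw [hNdef]; push_cast; ring
    have h3 : (2:ℝ) ≤ 2 * d / ν := by
      rw [le_div_iff₀ hν0]; nlinarith
    have h4 : 4 * d / ν + 2 * d / ν = 6 * d / ν := by ring
    linarith
  set η : ℝ := ((N:ℝ) ^ d)⁻¹ with hη
  have hNd1 : (1:ℝ) ≤ (N:ℝ) ^ d := one_le_pow₀ (by linarith)
  have hη0 : 0 < η := by positivity
  have hη1 : η ≤ 1 := by
    rw [hη]; exact inv_le_one_of_one_le₀ hNd1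
  -- uniform bound from covering by 2^d cubes
  have vol_bound : ∀ n : ℕ, α₀ * N ^ n ≤ R →
      volume (X ∩ Metric.closedBall c R) ≤
        ENNReal.ofReal (2 ^ d * ((1 - η) ^ n * R ^ d)) := by
    intro n hn
    have key := porous_cube_bound N hd hN2 hν0 hνN hα₀ hX n
    calc volume (X ∩ Metric.closedBall c R)
        ≤ ∑ ε : Fin d → Bool,
            volume (X ∩ cube (WithLp.toLp 2 fun i => c i - R + (if ε i then R else 0)) R) := by
          refine le_trans (measure_mono ?_) (measure_iUnion_fintype_le _ _)
          intro y ⟨hyX, hyB⟩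
          obtain ⟨s, ⟨ε, rfl⟩, hys⟩ := ball_subset_cubes c hR hyB
          exact Set.mem_iUnion.2 ⟨ε, hyX, hys⟩
      _ ≤ ∑ _ε : Fin d → Bool, ENNReal.ofReal ((1 - η) ^ n * R ^ d) := by
          apply Finset.sum_le_sum
          intro ε _
          exact key _ R hR hRα₁ hn
      _ = ENNReal.ofReal (2 ^ d * ((1 - η) ^ n * R ^ d)) := by
          rw [Finset.sum_const, Finset.card_univ, Fintype.card_fun, Fintype.card_fin,
            Fintype.card_bool]
          rw [nsmul_eq_mul, ← ENNReal.ofReal_natCast, ← ENNReal.ofReal_mul (by positivity)]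
          push_cast
          ring_nf
  have hη1' : 0 ≤ 1 - η ∧ 1 - η < 1 := ⟨by linarith, by linarith⟩
  rcases eq_or_lt_of_le hα₀ with hz | hα₀pos
  · -- α₀ = 0
    have h0 : volume (X ∩ Metric.closedBall c R) = 0 := by
      have hto : Tendsto (fun n : ℕ => ENNReal.ofReal (2 ^ d * ((1 - η) ^ n * R ^ d)))
          atTop (nhds 0) := by
        have h1 : Tendsto (fun n : ℕ => 2 ^ d * ((1 - η) ^ n * R ^ d)) atTop (nhds 0) := by
          have := (tendsto_pow_atTop_nhds_zero_of_lt_one hη1'.1 hη1'.2)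
          have h2 := this.const_mul ((2:ℝ) ^ d)
          have h3 := h2.mul_const (R ^ d)
          simpa [mul_assoc] using h3
        have := (ENNReal.continuous_ofReal.tendsto 0).comp h1
        simpa [Function.comp_def] using this
      refine le_antisymm (ge_of_tendsto' hto fun n => ?_) zero_le
      exact vol_bound n (by rw [← hz]; simpa using hR.le)
    rw [h0]; exact zero_le
  · -- α₀ > 0
    have hRα : 1 ≤ R / α₀ := by
      rw [le_div_iff₀ hα₀pos]; linarith
    have hlogN : 0 < Real.log N := Real.log_pos (by linarith)
    set n : ℕ := ⌊Real.logb N (R / α₀)⌋₊ with hn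
    have hlb0 : 0 ≤ Real.logb N (R / α₀) := Real.logb_nonneg (by linarith) hRα
    have hn1 : (n:ℝ) ≤ Real.logb N (R / α₀) := Nat.floor_le hlb0
    have hn2 : Real.logb N (R / α₀) < n + 1 := Nat.lt_floor_add_one _
    have hNn : (N:ℝ) ^ n ≤ R / α₀ := by
      have h1 : ((N:ℝ) ^ n : ℝ) = (N:ℝ) ^ ((n:ℕ):ℝ) := (Real.rpow_natCast _ n).symm
      rw [h1]
      calc (N:ℝ) ^ ((n:ℕ):ℝ) ≤ (N:ℝ) ^ Real.logb N (R/α₀) :=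
            Real.rpow_le_rpow_of_exponent_le (by linarith) hn1
        _ = R / α₀ := Real.rpow_logb hN0 (by linarith) (by positivity)
    have hcond : α₀ * (N:ℝ) ^ n ≤ R := by
      have h2 := mul_le_mul_of_nonneg_left hNn hα₀
      calc α₀ * (N:ℝ) ^ n ≤ α₀ * (R / α₀) := h2
        _ = R := by field_simp
    refine (vol_bound n hcond).trans (ENNReal.ofReal_le_ofReal ?_)
    set s : ℝ := η / Real.log N with hs
    have hratio : 0 < α₀ / R := by positivity
    have hratio1 : α₀ / R ≤ 1 := by
      rw [div_le_one hR]; linarith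
    -- exponent comparison γ ≤ s
    have hγs : γ ≤ s := by
      have hνN6 : (N:ℝ) * ν ≤ 6 * d := by
        rw [le_div_iff₀ hν0] at hN6; linarith
      have hkey : ν ^ d * ((N:ℝ) ^ d * Real.log N) ≤ Cd * (1 + L) := by
        have h1 : ν ^ d * (N:ℝ) ^ d = (ν * N) ^ d := (mul_pow _ _ _).symm
        have h2 : (ν * (N:ℝ)) ^ d ≤ (6 * d) ^ d := by
          apply pow_le_pow_left₀ (by positivity) (by linarith)
        have h3 : Real.log N ≤ Real.log (6 * d / ν) := Real.log_le_log hN0 hN6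
        have h4 : Real.log (6 * d / ν) = Real.log (6 * d) - Real.log ν :=
          Real.log_div (by positivity) hν0.ne'
        have h5 : L = -Real.log ν := by
          rw [hL, abs_of_neg (Real.log_neg hν0 hν1)]
        have h6 : Real.log (6 * d) ≤ 6 * d := by
          linarith [Real.log_le_sub_one_of_pos (show (0:ℝ) < 6 * d by positivity)]
        have h7 : Real.log N ≤ 6 * d * (1 + L) := by nlinarith
        have h8 : ν ^ d * ((N:ℝ) ^ d * Real.log N) = (ν * N) ^ d * Real.log N := by
          rw [← h1]; ring
        have h9 : (ν * (N:ℝ)) ^ d * Real.log N ≤ (6 * d) ^ d * (6 * d * (1 + L)) :=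
          mul_le_mul h2 h7 hlogN.le (by positivity)
        have h10 : (6 * (d:ℝ)) ^ d * (6 * d * (1 + L)) = (6 * d) ^ (d + 1) * (1 + L) := by
          rw [pow_succ]; ring
        have h11 : (6 * (d:ℝ)) ^ (d + 1) * (1 + L) ≤ Cd * (1 + L) := by
          apply mul_le_mul_of_nonneg_right _ (by linarith)
          rw [hCd]
          nlinarith [one_le_pow₀ (show (1:ℝ) ≤ 2 by norm_num) (n := d),
            pow_pos (show (0:ℝ) < 6 * d by positivity) (d + 1)]
        rw [h8]; linarith
      have hNdpos : (0:ℝ) < (N:ℝ) ^ d := by positivity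
      rw [hγ, hs, hη, div_le_div_iff₀ (by positivity) hlogN, inv_mul_eq_div,
        le_div_iff₀ hNdpos]
      nlinarith
    -- chain of estimates
    have step1 : (1 - η) ^ n ≤ Real.exp (-(η * n)) := by
      calc (1 - η) ^ n ≤ Real.exp (-η) ^ n := by
            apply pow_le_pow_left₀ hη1'.1
            linarith [Real.add_one_le_exp (-η)]
        _ = Real.exp (-(η * n)) := by
            rw [← Real.exp_nat_mul]; congr 1; ring
    have step2 : Real.exp (-(η * n)) ≤ Real.exp η * (α₀ / R) ^ s := by
      have h1 : -(η * n) ≤ η - η * Real.logb N (R / α₀) := by nlinarith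
      have h4 : η * Real.logb N (R / α₀) = s * Real.log (R / α₀) := by
        rw [hs, Real.logb]; field_simp
      have h5 : Real.exp (-(s * Real.log (R / α₀))) = (α₀ / R) ^ s := by
        rw [Real.rpow_def_of_pos hratio, Real.log_div hα₀pos.ne' hR.ne',
          Real.log_div hR.ne' hα₀pos.ne']
        congr 1; ring
      calc Real.exp (-(η * n)) ≤ Real.exp (η - η * Real.logb N (R / α₀)) :=
            Real.exp_le_exp.2 h1
        _ = Real.exp η * Real.exp (-(η * Real.logb N (R / α₀))) := by
            rw [← Real.exp_add]; congr 1; try ring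
        _ = Real.exp η * (α₀ / R) ^ s := by rw [h4, h5]
    have step3 : (α₀ / R) ^ s ≤ (α₀ / R) ^ γ :=
      Real.rpow_le_rpow_of_exponent_ge hratio hratio1 hγs
    have step4 : Real.exp η ≤ 3 := by
      have := Real.exp_le_exp.2 hη1
      have h2 := Real.exp_one_lt_d9
      linarith
    have chain : (1 - η) ^ n ≤ 3 * (α₀ / R) ^ γ := by
      calc (1 - η) ^ n ≤ Real.exp η * (α₀ / R) ^ s := step1.trans step2
        _ ≤ 3 * (α₀ / R) ^ γ := by
            apply mul_le_mul step4 step3 (Real.rpow_nonneg hratio.le s) (by norm_num)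
    have h3Cd : 3 * (2:ℝ) ^ d ≤ Cd := by
      rw [hCd]
      nlinarith [one_le_pow₀ (show (1:ℝ) ≤ 6 * d by linarith) (n := d + 1),
        pow_pos (show (0:ℝ) < 2 by norm_num) d]
    have hXγ : 0 ≤ (α₀ / R) ^ γ := Real.rpow_nonneg hratio.le γ
    have hRd : 0 ≤ R ^ d := pow_nonneg hR.le d
    calc (2:ℝ) ^ d * ((1 - η) ^ n * R ^ d)
        ≤ (2:ℝ) ^ d * ((3 * (α₀ / R) ^ γ) * R ^ d) := by
          apply mul_le_mul_of_nonneg_left _ (by positivity)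
          exact mul_le_mul_of_nonneg_right chain hRd
      _ = 3 * (2:ℝ) ^ d * (R ^ d * (α₀ / R) ^ γ) := by ring
      _ ≤ Cd * (R ^ d * (α₀ / R) ^ γ) :=
          mul_le_mul_of_nonneg_right h3Cd (mul_nonneg hRd hXγ)
      _ = Cd * R ^ d * (α₀ / R) ^ γ := by ring
end
end

section
/- Let Y ⊂ ℝ^d be ν-porous on lines from scales α₀ to α₁ with ν ∈ (0,1). Then there exist constants C > 0 and γ > 0 depending only on ν, with γ = ν/(C(1 + |log ν|)), such that for every line segment τ of length R with α₀ < R < α₁, the one-dimensional Lebesgue outer measure (along τ) of τ ∩ Y satisfies |τ ∩ Y| ≤ C R (α₀/R)^γ. -/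
open MeasureTheory Metric Set Function Filter Topology
open scoped ENNReal Pointwise

set_option maxHeartbeats 1000000

noncomputable section

lemma concave_aux {p : ℝ} (hp₀ : 0 ≤ p) (hp₁ : p ≤ 1) {x y : ℝ} (hx : 0 ≤ x) (hy : 0 ≤ y) :
    x ^ p + y ^ p ≤ 2 ^ ((1:ℝ) - p) * (x + y) ^ p := by
  have h := (Real.concaveOn_rpow hp₀ hp₁).2 (Set.mem_Ici.2 hx) (Set.mem_Ici.2 hy)
    (by norm_num : (0:ℝ) ≤ 1/2) (by norm_num : (0:ℝ) ≤ 1/2) (by norm_num)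
  simp only [smul_eq_mul] at h
  have h2 : (1/2 : ℝ) * x + (1/2 : ℝ) * y = (x + y) / 2 := by ring
  rw [h2] at h
  have h3 : ((x + y) / 2) ^ p = (x + y) ^ p / 2 ^ p :=
    Real.div_rpow (by linarith) (by norm_num : (0:ℝ) ≤ 2) p
  have h4 : (2:ℝ) ^ ((1:ℝ) - p) = 2 / 2 ^ p := by
    rw [Real.rpow_sub (by norm_num), Real.rpow_one]
  have h5 : (0:ℝ) < 2 ^ p := Real.rpow_pos_of_pos (by norm_num) p
  rw [h3] at h
  have h7 := mul_le_mul_of_nonneg_right h h5.le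
  rw [div_mul_cancel₀ _ (ne_of_gt h5)] at h7
  rw [h4, div_mul_eq_mul_div, le_div_iff₀ h5]
  nlinarith [h7]

/-- One-dimensional porosity iteration. -/
lemma oneDim_key {ν α₀ R γ p : ℝ} (hν0 : 0 < ν) (hν1 : ν < 1) (hα₀ : 0 ≤ α₀)
    (hγpos : 0 < γ) (hp : p = 1 - γ) (hppos : 0 < p) (hp1 : p ≤ 1)
    (hkey : (2:ℝ) ^ γ * (1 - ν) ^ p ≤ 1) (S : Set ℝ)
    (hole : ∀ t₀ t₁ : ℝ, α₀ < t₁ - t₀ → t₁ - t₀ ≤ R →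
      ∃ s, t₀ ≤ s ∧ s ≤ t₁ ∧ ∀ t, |t - s| < ν * (t₁ - t₀) → t ∉ S) :
    ∀ n : ℕ, ∀ t₀ t₁ : ℝ, t₀ ≤ t₁ → t₁ - t₀ ≤ R →
      volume (S ∩ Set.Icc t₀ t₁) ≤
        ENNReal.ofReal (4 * α₀ ^ γ * (t₁ - t₀) ^ p + (1 - ν) ^ n * (t₁ - t₀)) := by
  have hp0 : 0 ≤ p := hppos.le
  intro n
  induction n with
  | zero =>
    intro t₀ t₁ h01 hRle
    have hnn : 0 ≤ 4 * α₀ ^ γ * (t₁ - t₀) ^ p :=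
      mul_nonneg (mul_nonneg (by norm_num) (Real.rpow_nonneg hα₀ _))
        (Real.rpow_nonneg (by linarith) _)
    calc volume (S ∩ Set.Icc t₀ t₁) ≤ volume (Set.Icc t₀ t₁) :=
          measure_mono Set.inter_subset_right
      _ = ENNReal.ofReal (t₁ - t₀) := Real.volume_Icc
      _ ≤ _ := ENNReal.ofReal_le_ofReal (by rw [pow_zero]; nlinarith)
  | succ n ih =>
    intro t₀ t₁ h01 hRle
    have hLnn : 0 ≤ t₁ - t₀ := by linarith
    by_cases hcase : t₁ - t₀ ≤ α₀
    · -- trivial bound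
      have hnn2 : 0 ≤ (1 - ν) ^ (n + 1) * (t₁ - t₀) :=
        mul_nonneg (pow_nonneg (by linarith) _) hLnn
      have hbig : t₁ - t₀ ≤ 4 * α₀ ^ γ * (t₁ - t₀) ^ p := by
        rcases eq_or_lt_of_le hLnn with h0 | h0
        · rw [← h0]
          have hz : (0:ℝ) ^ p = 0 := Real.zero_rpow (ne_of_gt hppos)
          rw [hz, mul_zero]
        · have e0 : γ + p = 1 := by rw [hp]; ring
          have e1 : t₁ - t₀ = (t₁ - t₀) ^ γ * (t₁ - t₀) ^ p := by
            rw [← Real.rpow_add h0, e0, Real.rpow_one]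
          have e2 : (t₁ - t₀) ^ γ ≤ α₀ ^ γ :=
            Real.rpow_le_rpow hLnn hcase hγpos.le
          have e3 : 0 ≤ (t₁ - t₀) ^ p := Real.rpow_nonneg hLnn _
          nlinarith
      calc volume (S ∩ Set.Icc t₀ t₁) ≤ volume (Set.Icc t₀ t₁) :=
            measure_mono Set.inter_subset_right
        _ = ENNReal.ofReal (t₁ - t₀) := Real.volume_Icc
        _ ≤ _ := ENNReal.ofReal_le_ofReal (by nlinarith)
    · push_neg at hcase
      obtain ⟨s, hs0, hs1, hhole⟩ := hole t₀ t₁ hcase hRle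
      have hLpos : 0 < t₁ - t₀ := lt_of_le_of_lt hα₀ hcase
      have hνL : 0 < ν * (t₁ - t₀) := mul_pos hν0 hLpos
      set m₁ : ℝ := max t₀ (s - ν * (t₁ - t₀)) with hm₁
      set m₂ : ℝ := min t₁ (s + ν * (t₁ - t₀)) with hm₂
      have hm₁0 : t₀ ≤ m₁ := le_max_left _ _
      have hm₁1 : m₁ ≤ t₁ := max_le h01 (by linarith)
      have hm₂0 : t₀ ≤ m₂ := le_min h01 (by linarith)
      have hm₂1 : m₂ ≤ t₁ := min_le_left _ _
      have hcover : S ∩ Set.Icc t₀ t₁ ⊆ (S ∩ Set.Icc t₀ m₁) ∪ (S ∩ Set.Icc m₂ t₁) := by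
        rintro t ⟨htS, ht0, ht1⟩
        have hnot : ¬ |t - s| < ν * (t₁ - t₀) := fun h => hhole t h htS
        push_neg at hnot
        rcases le_abs.1 hnot with h | h
        · right
          exact ⟨htS, le_trans (min_le_right _ _) (by linarith), ht1⟩
        · left
          exact ⟨htS, ht0, le_trans (by linarith : t ≤ s - ν * (t₁ - t₀)) (le_max_right _ _)⟩
      have h1 := ih t₀ m₁ hm₁0 (by linarith)
      have h2 := ih m₂ t₁ hm₂1 (by linarith)
      have hL₁nn : 0 ≤ m₁ - t₀ := by linarith
      have hL₂nn : 0 ≤ t₁ - m₂ := by linarith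
      have hsum : (m₁ - t₀) + (t₁ - m₂) ≤ (1 - ν) * (t₁ - t₀) := by
        rcases max_cases t₀ (s - ν * (t₁ - t₀)) with ⟨e1, _⟩ | ⟨e1, _⟩ <;>
          rcases min_cases t₁ (s + ν * (t₁ - t₀)) with ⟨e2, _⟩ | ⟨e2, _⟩ <;>
          rw [hm₁, hm₂, e1, e2] <;>
          nlinarith [hνL.le, mul_nonneg (by linarith : (0:ℝ) ≤ 1 - ν) hLnn]
      have hccv : (m₁ - t₀) ^ p + (t₁ - m₂) ^ p ≤ (t₁ - t₀) ^ p := by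
        have c1 : (m₁ - t₀) ^ p + (t₁ - m₂) ^ p ≤
            2 ^ ((1:ℝ) - p) * ((m₁ - t₀) + (t₁ - m₂)) ^ p :=
          concave_aux hp0 hp1 hL₁nn hL₂nn
        have c2 : ((m₁ - t₀) + (t₁ - m₂)) ^ p ≤ ((1 - ν) * (t₁ - t₀)) ^ p :=
          Real.rpow_le_rpow (by linarith) hsum hp0
        have c3 : ((1 - ν) * (t₁ - t₀)) ^ p = (1 - ν) ^ p * (t₁ - t₀) ^ p :=
          Real.mul_rpow (by linarith) hLnn
        have c4 : ((1:ℝ) - p) = γ := by rw [hp]; ring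
        have c5 : (0:ℝ) < 2 ^ ((1:ℝ) - p) := Real.rpow_pos_of_pos (by norm_num) _
        have c6 : 0 ≤ (t₁ - t₀) ^ p := Real.rpow_nonneg hLnn _
        calc (m₁ - t₀) ^ p + (t₁ - m₂) ^ p
            ≤ 2 ^ ((1:ℝ) - p) * ((m₁ - t₀) + (t₁ - m₂)) ^ p := c1
          _ ≤ 2 ^ ((1:ℝ) - p) * ((1 - ν) * (t₁ - t₀)) ^ p :=
              mul_le_mul_of_nonneg_left c2 c5.le
          _ = (2 ^ γ * (1 - ν) ^ p) * (t₁ - t₀) ^ p := by rw [c3, c4]; ring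
          _ ≤ 1 * (t₁ - t₀) ^ p := mul_le_mul_of_nonneg_right hkey c6
          _ = (t₁ - t₀) ^ p := one_mul _
      have w1' : 0 ≤ α₀ ^ γ := Real.rpow_nonneg hα₀ γ
      have w2 : 0 ≤ (1 - ν) ^ n := pow_nonneg (by linarith) n
      have hA1 : 0 ≤ 4 * α₀ ^ γ * (m₁ - t₀) ^ p + (1 - ν) ^ n * (m₁ - t₀) := by
        have := Real.rpow_nonneg hL₁nn p
        positivity
      have hA2 : 0 ≤ 4 * α₀ ^ γ * (t₁ - m₂) ^ p + (1 - ν) ^ n * (t₁ - m₂) := by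
        have := Real.rpow_nonneg hL₂nn p
        positivity
      have hreal : (4 * α₀ ^ γ * (m₁ - t₀) ^ p + (1 - ν) ^ n * (m₁ - t₀)) +
          (4 * α₀ ^ γ * (t₁ - m₂) ^ p + (1 - ν) ^ n * (t₁ - m₂)) ≤
          4 * α₀ ^ γ * (t₁ - t₀) ^ p + (1 - ν) ^ (n + 1) * (t₁ - t₀) := by
        have w3 := mul_le_mul_of_nonneg_left hccv
          (by positivity : (0:ℝ) ≤ 4 * α₀ ^ γ)
        have w4 := mul_le_mul_of_nonneg_left hsum w2
        have w5 : (1 - ν) ^ n * ((1 - ν) * (t₁ - t₀)) = (1 - ν) ^ (n + 1) * (t₁ - t₀) := by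
          rw [pow_succ]; ring
        linarith [w3, w4, w5]
      calc volume (S ∩ Set.Icc t₀ t₁)
          ≤ volume ((S ∩ Set.Icc t₀ m₁) ∪ (S ∩ Set.Icc m₂ t₁)) := measure_mono hcover
        _ ≤ volume (S ∩ Set.Icc t₀ m₁) + volume (S ∩ Set.Icc m₂ t₁) := measure_union_le _ _
        _ ≤ ENNReal.ofReal (4 * α₀ ^ γ * (m₁ - t₀) ^ p + (1 - ν) ^ n * (m₁ - t₀)) +
            ENNReal.ofReal (4 * α₀ ^ γ * (t₁ - m₂) ^ p + (1 - ν) ^ n * (t₁ - m₂)) :=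
              add_le_add h1 h2
        _ = ENNReal.ofReal ((4 * α₀ ^ γ * (m₁ - t₀) ^ p + (1 - ν) ^ n * (m₁ - t₀)) +
            (4 * α₀ ^ γ * (t₁ - m₂) ^ p + (1 - ν) ^ n * (t₁ - m₂))) :=
              (ENNReal.ofReal_add hA1 hA2).symm
        _ ≤ _ := ENNReal.ofReal_le_ofReal hreal

/-- Passing to the limit. -/
lemma oneDim_limit {ν α₀ R γ p : ℝ} (hν0 : 0 < ν) (hν1 : ν < 1) (hα₀ : 0 ≤ α₀)
    (hR : 0 < R)
    (hγpos : 0 < γ) (hp : p = 1 - γ) (hppos : 0 < p) (hp1 : p ≤ 1)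
    (hkey : (2:ℝ) ^ γ * (1 - ν) ^ p ≤ 1) (S : Set ℝ) (hS : S ⊆ Set.Icc 0 R)
    (hole : ∀ t₀ t₁ : ℝ, α₀ < t₁ - t₀ → t₁ - t₀ ≤ R →
      ∃ s, t₀ ≤ s ∧ s ≤ t₁ ∧ ∀ t, |t - s| < ν * (t₁ - t₀) → t ∉ S) :
    volume S ≤ ENNReal.ofReal (4 * α₀ ^ γ * R ^ p) := by
  have key := oneDim_key hν0 hν1 hα₀ hγpos hp hppos hp1 hkey S hole
  have hlim0 : Tendsto (fun n : ℕ => ENNReal.ofReal ((1 - ν) ^ n * R)) atTop (𝓝 0) := by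
    have h0 : Tendsto (fun n : ℕ => (1 - ν) ^ n * R) atTop (𝓝 0) := by
      have := tendsto_pow_atTop_nhds_zero_of_lt_one (by linarith : (0:ℝ) ≤ 1 - ν)
        (by linarith : 1 - ν < 1)
      simpa using this.mul_const R
    have := ENNReal.tendsto_ofReal h0
    simpa using this
  have hlim : Tendsto (fun n : ℕ => ENNReal.ofReal (4 * α₀ ^ γ * R ^ p) +
      ENNReal.ofReal ((1 - ν) ^ n * R)) atTop (𝓝 (ENNReal.ofReal (4 * α₀ ^ γ * R ^ p))) := by
    simpa using tendsto_const_nhds.add hlim0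
  refine ge_of_tendsto' hlim fun n => ?_
  calc volume S ≤ volume (S ∩ Set.Icc 0 R) := measure_mono (fun t ht => ⟨ht, hS ht⟩)
    _ ≤ ENNReal.ofReal (4 * α₀ ^ γ * (R - 0) ^ p + (1 - ν) ^ n * (R - 0)) :=
          key n 0 R hR.le (by linarith)
    _ = ENNReal.ofReal (4 * α₀ ^ γ * R ^ p + (1 - ν) ^ n * R) := by norm_num
    _ ≤ _ := ENNReal.ofReal_add_le

/-- **Measure of the intersection of a line-porous set with a segment** (Lemma A.5): if `Y`
is `ν`-porous on lines from scales `α₀` to `α₁` and `τ` is a line segment of length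
`α₀ < R < α₁`, then the one-dimensional Lebesgue measure of `τ ∩ Y` (in the isometric
parametrization of the segment from `a` to `b` by arclength) is at most `C R (α₀/R)^γ`,
with `γ = ν / (C (1 + |log ν|))` and `C, γ` depending only on `ν`. -/
theorem measure_segment_inter_line_porous (ν : ℝ) (hν : ν ∈ Set.Ioo (0 : ℝ) 1) :
    ∃ C > (0 : ℝ),
      ∀ (d : ℕ) (α₀ α₁ : ℝ) (Y : Set (EuclideanSpace ℝ (Fin d))),
        0 ≤ α₀ → PorousOnLines ν α₀ α₁ Y →
        ∀ a b : EuclideanSpace ℝ (Fin d), α₀ < dist a b → dist a b < α₁ →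
          volume {t : ℝ | t ∈ Set.Icc 0 (dist a b) ∧ a + t • (‖b - a‖⁻¹ • (b - a)) ∈ Y} ≤
            ENNReal.ofReal
              (C * dist a b * (α₀ / dist a b) ^ (ν / (C * (1 + |Real.log ν|)))) := by
  obtain ⟨hν0, hν1⟩ := hν
  refine ⟨4, by norm_num, ?_⟩
  intro d α₀ α₁ Y hα₀ hpor a b hab1 hab2
  have habs : (0:ℝ) ≤ |Real.log ν| := abs_nonneg _
  set γ : ℝ := ν / (4 * (1 + |Real.log ν|)) with hγdef
  have hγpos : 0 < γ := div_pos hν0 (by positivity)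
  have hγle : γ ≤ ν / 4 := by
    rw [hγdef, div_le_div_iff₀ (by positivity) (by norm_num)]
    nlinarith
  clear_value γ
  set p : ℝ := 1 - γ with hpdef
  clear_value p
  have hppos : 0 < p := by rw [hpdef]; nlinarith
  have hp1 : p ≤ 1 := by rw [hpdef]; nlinarith [hγpos]
  have hp34 : 3/4 ≤ p := by rw [hpdef]; nlinarith
  have hRpos : 0 < dist a b := lt_of_le_of_lt hα₀ hab1
  have hba : ‖b - a‖ = dist a b := dist_eq_norm' a b ▸ rfl
  have hbane : ‖b - a‖ ≠ 0 := by rw [hba]; exact ne_of_gt hRpos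
  set u : EuclideanSpace ℝ (Fin d) := ‖b - a‖⁻¹ • (b - a) with hudef
  have hu : ‖u‖ = 1 := by
    rw [hudef, norm_smul, norm_inv, norm_norm]
    exact inv_mul_cancel₀ hbane
  clear_value u
  have hdist : ∀ s t : ℝ, dist (a + s • u) (a + t • u) = |s - t| := by
    intro s t
    rw [dist_eq_norm]
    have he : (a + s • u) - (a + t • u) = (s - t) • u := by module
    rw [he, norm_smul, hu, mul_one, Real.norm_eq_abs]
  set S : Set ℝ := {t : ℝ | t ∈ Set.Icc 0 (dist a b) ∧ a + t • u ∈ Y} with hSdef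
  have hSsub : S ⊆ Set.Icc 0 (dist a b) := fun t ht => ht.1
  -- the hole property
  have hole : ∀ t₀ t₁ : ℝ, α₀ < t₁ - t₀ → t₁ - t₀ ≤ dist a b →
      ∃ s, t₀ ≤ s ∧ s ≤ t₁ ∧ ∀ t, |t - s| < ν * (t₁ - t₀) → t ∉ S := by
    intro t₀ t₁ h1 h2
    have ht01 : t₀ ≤ t₁ := by nlinarith
    have hd : dist (a + t₀ • u) (a + t₁ • u) = t₁ - t₀ := by
      rw [hdist, abs_sub_comm, abs_of_nonneg (by linarith)]
    obtain ⟨x, hxseg, hxdisj⟩ := hpor (a + t₀ • u) (a + t₁ • u)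
      (by rw [hd]; exact h1) (by rw [hd]; exact lt_of_le_of_lt h2 hab2)
    obtain ⟨c1, c2, hc1, hc2, hc12, hx⟩ := hxseg
    refine ⟨c1 * t₀ + c2 * t₁, ?_, ?_, ?_⟩
    · have e : c1 * t₀ + c2 * t₁ - t₀ = c2 * (t₁ - t₀) := by linear_combination t₀ * hc12
      nlinarith [mul_nonneg hc2 (by linarith : (0:ℝ) ≤ t₁ - t₀)]
    · have e : t₁ - (c1 * t₀ + c2 * t₁) = c1 * (t₁ - t₀) := by linear_combination (-t₁) * hc12
      nlinarith [mul_nonneg hc1 (by linarith : (0:ℝ) ≤ t₁ - t₀)]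
    intro t ht htS
    have hxeq : x = a + (c1 * t₀ + c2 * t₁) • u := by
      rw [← hx]
      match_scalars <;> first | ring1 | linear_combination hc12 | linear_combination -hc12
    have hmem : a + t • u ∈ Metric.ball x (ν * dist (a + t₀ • u) (a + t₁ • u)) := by
      rw [Metric.mem_ball, hxeq, hdist, hd]
      exact ht
    exact Set.disjoint_left.1 hxdisj hmem htS.2
  -- key exponent inequality
  have hlog1ν : Real.log (1 - ν) ≤ -ν := by
    have := Real.log_le_sub_one_of_pos (by linarith : (0:ℝ) < 1 - ν)
    linarith
  have hlog2 : Real.log 2 ≤ 1 := by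
    have := Real.log_le_sub_one_of_pos (by norm_num : (0:ℝ) < 2)
    linarith
  have hlog2nn : (0:ℝ) ≤ Real.log 2 := Real.log_nonneg (by norm_num)
  have hkey : (2:ℝ) ^ γ * (1 - ν) ^ p ≤ 1 := by
    rw [Real.rpow_def_of_pos (by norm_num : (0:ℝ) < 2),
      Real.rpow_def_of_pos (by linarith : (0:ℝ) < 1 - ν), ← Real.exp_add,
      Real.exp_le_one_iff]
    have h1 : Real.log 2 * γ ≤ ν / 4 := by nlinarith [hγpos.le]
    have h2 : Real.log (1 - ν) * p ≤ -(3/4 * ν) := by nlinarith [hν0.le]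
    linarith
  have hfinal := oneDim_limit hν0 hν1 hα₀ hRpos hγpos hpdef hppos hp1 hkey S hSsub hole
  have heq : 4 * dist a b * (α₀ / dist a b) ^ γ = 4 * α₀ ^ γ * dist a b ^ p := by
    rw [Real.div_rpow hα₀ hRpos.le, hpdef, Real.rpow_sub hRpos, Real.rpow_one]
    have hRγ : dist a b ^ γ ≠ 0 := ne_of_gt (Real.rpow_pos_of_pos hRpos γ)
    field_simp
  rw [heq]
  exact hfinal
end
end
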